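/- arXiv:1912.07107 — 8 statements merged into one kernel-verified Lean document; each statement's English description precedes it below -/
import Mathlib

section
/- For any positive semidefinite Σ, the kernel of the Riccati update 𝒯_q(Σ) = Ξ(Σ) − Ξ(Σ)C_qᵀ(C_q Ξ(Σ) C_qᵀ + F_q F_qᵀ)⁻¹ C_q Ξ(Σ) equals the kernel of Ξ(Σ), which in turn equals ker(Σ Aᵀ) ∩ ker(Dᵀ). -/
open Matrix

private lemma conj_dot {d e : ℕ} (B : Matrix (Fin d) (Fin e) ℝ)
    (P : Matrix (Fin e) (Fin e) ℝ) (x : Fin d → ℝ) :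
    x ⬝ᵥ (B * P * Bᵀ) *ᵥ x = (Bᵀ *ᵥ x) ⬝ᵥ P *ᵥ (Bᵀ *ᵥ x) := by
  rw [← mulVec_mulVec, ← mulVec_mulVec, dotProduct_mulVec, ← mulVec_transpose]

/-- For any positive semidefinite `S`, the kernel of the Riccati
update `𝒯_q(S) = Ξ(S) − Ξ(S)Cᵀ(C Ξ(S) Cᵀ + F Fᵀ)⁻¹ C Ξ(S)` equals the kernel
of `Ξ(S) = D Dᵀ + A S Aᵀ`, which in turn equals `ker(S Aᵀ) ∩ ker(Dᵀ)`. -/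
theorem riccati_update_kernel (d m p : ℕ)
    (A : Matrix (Fin d) (Fin d) ℝ) (D : Matrix (Fin d) (Fin m) ℝ)
    (C : Matrix (Fin p) (Fin d) ℝ) (F : Matrix (Fin p) (Fin m) ℝ)
    (hF : IsUnit (F * Fᵀ)) (hDF : D * Fᵀ = 0)
    (S : Matrix (Fin d) (Fin d) ℝ) (hS : S.PosSemidef)
    (Xi T : Matrix (Fin d) (Fin d) ℝ)
    (hXi : Xi = D * Dᵀ + A * S * Aᵀ)
    (hT : T = Xi - Xi * Cᵀ * (C * Xi * Cᵀ + F * Fᵀ)⁻¹ * C * Xi) :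
    {x : Fin d → ℝ | T.mulVec x = 0} = {x : Fin d → ℝ | Xi.mulVec x = 0} ∧
    {x : Fin d → ℝ | Xi.mulVec x = 0} =
      {x : Fin d → ℝ | (S * Aᵀ).mulVec x = 0} ∩ {x : Fin d → ℝ | Dᵀ.mulVec x = 0} := by
  have hDD : (D * Dᵀ).PosSemidef := by simpa using posSemidef_self_mul_conjTranspose D
  have hASA : (A * S * Aᵀ).PosSemidef := by simpa using hS.mul_mul_conjTranspose_same A
  have hXiPS : Xi.PosSemidef := hXi ▸ hDD.add hASA
  have hFF : (F * Fᵀ).PosSemidef := by simpa using posSemidef_self_mul_conjTranspose F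
  have hFFinj : Function.Injective ((F * Fᵀ).mulVec) := mulVec_injective_iff_isUnit.mpr hF
  have hFFker : ∀ z : Fin p → ℝ, (F * Fᵀ) *ᵥ z = 0 → z = 0 := fun z hz => by
    have := hFFinj (a₁ := z) (a₂ := 0) (by simpa using hz)
    simpa using this
  -- Part 2 first
  have part2 : {x : Fin d → ℝ | Xi.mulVec x = 0} =
      {x : Fin d → ℝ | (S * Aᵀ).mulVec x = 0} ∩ {x : Fin d → ℝ | Dᵀ.mulVec x = 0} := by
    ext x
    simp only [Set.mem_setOf_eq, Set.mem_inter_iff]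
    constructor
    · intro hx
      have hq : x ⬝ᵥ (D * Dᵀ) *ᵥ x + x ⬝ᵥ (A * S * Aᵀ) *ᵥ x = 0 := by
        have : x ⬝ᵥ Xi *ᵥ x = 0 := by rw [hx, dotProduct_zero]
        rw [hXi, add_mulVec, dotProduct_add] at this
        exact this
      have h1 : 0 ≤ x ⬝ᵥ (D * Dᵀ) *ᵥ x := by simpa using hDD.dotProduct_mulVec_nonneg x
      have h2 : 0 ≤ x ⬝ᵥ (A * S * Aᵀ) *ᵥ x := by simpa using hASA.dotProduct_mulVec_nonneg x
      have hz1 : x ⬝ᵥ (D * Dᵀ) *ᵥ x = 0 := by linarith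
      have hz2 : x ⬝ᵥ (A * S * Aᵀ) *ᵥ x = 0 := by linarith
      constructor
      · -- S Aᵀ x = 0
        rw [conj_dot A S x] at hz2
        have := (hS.dotProduct_mulVec_zero_iff (Aᵀ *ᵥ x)).mp (by simpa using hz2)
        rw [← mulVec_mulVec]
        exact this
      · -- Dᵀ x = 0
        rw [← mulVec_mulVec, dotProduct_mulVec, ← mulVec_transpose] at hz1
        exact dotProduct_self_eq_zero.mp hz1
    · rintro ⟨h1, h2⟩
      rw [hXi, add_mulVec, ← mulVec_mulVec, h2, mulVec_zero, Matrix.mul_assoc,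
        ← mulVec_mulVec, h1, mulVec_zero, add_zero]
  refine ⟨?_, part2⟩
  -- Part 1
  have hXiSym : Xiᵀ = Xi := (by simpa using hXiPS.1 : Xi.IsSymm).eq
  obtain ⟨M, hM⟩ : ∃ M, M = C * Xi * Cᵀ + F * Fᵀ := ⟨_, rfl⟩
  rw [show (C * Xi * Cᵀ + F * Fᵀ) = M from hM.symm] at hT
  have hMPS : M.PosSemidef := hM ▸ ((by simpa using hXiPS.mul_mul_conjTranspose_same C :
    (C * Xi * Cᵀ).PosSemidef)).add hFF
  have hMker : ∀ z : Fin p → ℝ, M *ᵥ z = 0 → z = 0 := by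
    intro z hz
    have hq : z ⬝ᵥ (C * Xi * Cᵀ) *ᵥ z + z ⬝ᵥ (F * Fᵀ) *ᵥ z = 0 := by
      have : z ⬝ᵥ M *ᵥ z = 0 := by rw [hz, dotProduct_zero]
      rwa [hM, add_mulVec, dotProduct_add] at this
    have h1 : 0 ≤ z ⬝ᵥ (C * Xi * Cᵀ) *ᵥ z := by
      simpa using (by simpa using hXiPS.mul_mul_conjTranspose_same C :
        (C * Xi * Cᵀ).PosSemidef).dotProduct_mulVec_nonneg z
    have h2 : 0 ≤ z ⬝ᵥ (F * Fᵀ) *ᵥ z := by simpa using hFF.dotProduct_mulVec_nonneg z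
    have hz2 : z ⬝ᵥ (F * Fᵀ) *ᵥ z = 0 := by linarith
    exact hFFker z ((hFF.dotProduct_mulVec_zero_iff z).mp (by simpa using hz2))
  have hMunit : IsUnit M := by
    rw [← mulVec_injective_iff_isUnit]
    intro a b hab
    have : M *ᵥ (a - b) = 0 := by rw [mulVec_sub, hab, sub_self]
    have := hMker _ this
    exact sub_eq_zero.mp this
  have hMdet : IsUnit M.det := (isUnit_iff_isUnit_det M).mp hMunit
  have hMinvM : M⁻¹ * M = 1 := nonsing_inv_mul M hMdet
  have hMsym : Mᵀ = M := by
    rw [hM]; simp [transpose_add, transpose_mul, hXiSym, Matrix.mul_assoc]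
  have hMinvSym : M⁻¹ᵀ = M⁻¹ := by rw [transpose_nonsing_inv, hMsym]
  obtain ⟨K, hK⟩ : ∃ K, K = Xi * Cᵀ * M⁻¹ := ⟨_, rfl⟩
  have hT' : T = Xi - K * C * Xi := by rw [hT, hK]
  have hKT : Kᵀ = M⁻¹ * (C * Xi) := by
    rw [hK]; simp [transpose_mul, hMinvSym, hXiSym, Matrix.mul_assoc]
  have hKM : K * M = Xi * Cᵀ := by
    rw [hK, Matrix.mul_assoc (Xi * Cᵀ) M⁻¹ M, hMinvM]
    simp
  have hNT : (1 - K * C)ᵀ = 1 - Cᵀ * Kᵀ := by simp [transpose_sub, transpose_mul]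
  have key : T = (1 - K * C) * Xi * (1 - K * C)ᵀ + K * (F * Fᵀ) * Kᵀ := by
    have h1 : (1 - K * C) * Xi * (1 - Cᵀ * Kᵀ) + K * (F * Fᵀ) * Kᵀ
        = Xi - Xi * (Cᵀ * Kᵀ) - K * (C * Xi) + K * M * Kᵀ := by
      rw [hM]
      simp only [Matrix.mul_sub, Matrix.sub_mul, Matrix.mul_add, Matrix.add_mul,
        Matrix.mul_one, Matrix.one_mul, Matrix.mul_assoc]
      abel
    have h2 : K * M * Kᵀ = Xi * (Cᵀ * Kᵀ) := by rw [hKM, Matrix.mul_assoc]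
    have h3 : K * (C * Xi) = Xi * (Cᵀ * Kᵀ) := by
      rw [hKT, hK]; simp [Matrix.mul_assoc]
    rw [hNT, h1, h2, hT', Matrix.mul_assoc K C Xi, h3]
    abel
  ext x
  simp only [Set.mem_setOf_eq]
  constructor
  · intro hx
    have hq : x ⬝ᵥ ((1 - K * C) * Xi * (1 - K * C)ᵀ) *ᵥ x
        + x ⬝ᵥ (K * (F * Fᵀ) * Kᵀ) *ᵥ x = 0 := by
      have : x ⬝ᵥ T *ᵥ x = 0 := by rw [hx, dotProduct_zero]
      rwa [key, add_mulVec, dotProduct_add] at this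
    rw [conj_dot (1 - K * C) Xi x, conj_dot K (F * Fᵀ) x] at hq
    set y := (1 - K * C)ᵀ *ᵥ x with hy
    set z := Kᵀ *ᵥ x with hzdef
    have h1 : 0 ≤ y ⬝ᵥ Xi *ᵥ y := by simpa using hXiPS.dotProduct_mulVec_nonneg y
    have h2 : 0 ≤ z ⬝ᵥ (F * Fᵀ) *ᵥ z := by simpa using hFF.dotProduct_mulVec_nonneg z
    have hqz : z ⬝ᵥ (F * Fᵀ) *ᵥ z = 0 := by linarith
    have hqy : y ⬝ᵥ Xi *ᵥ y = 0 := by linarith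
    have hz0 : z = 0 := hFFker z ((hFF.dotProduct_mulVec_zero_iff z).mp (by simpa using hqz))
    have hyx : y = x := by
      rw [hy, hNT, sub_mulVec, one_mulVec, ← mulVec_mulVec, ← hzdef, hz0, mulVec_zero, sub_zero]
    have := (hXiPS.dotProduct_mulVec_zero_iff y).mp (by simpa using hqy)
    rwa [hyx] at this
  · intro hx
    rw [hT', sub_mulVec, ← mulVec_mulVec, hx]
    simp
end

section
/- If (A, D) is a controllable pair, then for any sequence of d applications of Riccati update maps 𝒯_{q_1}, …, 𝒯_{q_d} (each of the form Σ ↦ Ξ(Σ) − K_q(Σ)C_qΞ(Σ) or Σ ↦ Ξ(Σ)), the composition applied to any positive semidefinite Σ is positive definite; in particular ker(𝒯_{q_d} ∘ ⋯ ∘ 𝒯_{q_1}(Σ)) = {0}. -/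
open Matrix

lemma aux_posDef_of_ker {n : Type*} [Fintype n] {M : Matrix n n ℝ} (hM : M.PosSemidef)
    (h : ∀ x, M *ᵥ x = 0 → x = 0) : M.PosDef := by
  refine PosDef.of_dotProduct_mulVec_pos hM.1 fun x hx => ?_
  rcases lt_or_eq_of_le (hM.dotProduct_mulVec_nonneg x) with h1 | h1
  · exact h1
  · exact absurd (h x ((hM.dotProduct_mulVec_zero_iff x).mp h1.symm)) hx

lemma psd_conj {n q : Type*} [Fintype n] [Fintype q] [DecidableEq q] {X : Matrix q q ℝ}
    (hX : X.PosSemidef) (B : Matrix n q ℝ) : (B * X * Bᵀ).PosSemidef := by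
  have h := hX.mul_mul_conjTranspose_same B
  rwa [conjTranspose_eq_transpose_of_trivial] at h

lemma sym_of_psd {n : Type*} [Fintype n] {X : Matrix n n ℝ} (hX : X.PosSemidef) : Xᵀ = X := by
  have h : Xᴴ = X := hX.isHermitian
  rwa [conjTranspose_eq_transpose_of_trivial] at h

lemma quad_conj {n q : Type*} [Fintype n] [Fintype q] (B : Matrix n q ℝ) (X : Matrix q q ℝ)
    (x : n → ℝ) : x ⬝ᵥ ((B * X * Bᵀ) *ᵥ x) = (Bᵀ *ᵥ x) ⬝ᵥ (X *ᵥ (Bᵀ *ᵥ x)) := by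
  rw [← mulVec_mulVec, ← mulVec_mulVec, dotProduct_mulVec, ← mulVec_transpose]

lemma ric_alg {d p : ℕ} (X : Matrix (Fin d) (Fin d) ℝ) (C : Matrix (Fin p) (Fin d) ℝ)
    (N M R : Matrix (Fin p) (Fin p) ℝ) (K : Matrix (Fin d) (Fin p) ℝ)
    (hXs : Xᵀ = X) (hNs : Nᵀ = N) (hNM : N * M = 1)
    (hM : M = C * X * Cᵀ + R) (hK : K = X * Cᵀ * N) :
    X - X * Cᵀ * N * C * X = (1 - K * C) * X * (1 - K * C)ᵀ + K * R * Kᵀ := by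
  have hKt : Kᵀ = N * C * X := by
    rw [hK, transpose_mul, transpose_mul, hNs, hXs, transpose_transpose, Matrix.mul_assoc]
  have hR : R = M - C * X * Cᵀ := by rw [hM, add_sub_cancel_left]
  have hKM : K * M = X * Cᵀ := by
    rw [hK, Matrix.mul_assoc (X * Cᵀ), hNM, Matrix.mul_one]
  have expand : (1 - K * C) * X * (1 - K * C)ᵀ + K * R * Kᵀ
      = X - K * (C * X) - X * Cᵀ * Kᵀ + K * M * Kᵀ := by
    rw [hR, transpose_sub, transpose_one, transpose_mul]
    simp only [Matrix.mul_sub, Matrix.sub_mul, Matrix.mul_one, Matrix.one_mul, Matrix.mul_assoc]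
    abel
  rw [expand, hKM, hKt, hK]
  simp only [Matrix.mul_assoc]
  abel

lemma ric_ker {d p : ℕ} {X : Matrix (Fin d) (Fin d) ℝ} (hX : X.PosSemidef)
    (C : Matrix (Fin p) (Fin d) ℝ) {R : Matrix (Fin p) (Fin p) ℝ} (hR : R.PosDef) :
    (X - X * Cᵀ * (C * X * Cᵀ + R)⁻¹ * C * X).PosSemidef ∧
    ∀ x, (X - X * Cᵀ * (C * X * Cᵀ + R)⁻¹ * C * X) *ᵥ x = 0 → X *ᵥ x = 0 := by
  have hXs : Xᵀ = X := sym_of_psd hX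
  have hM : (C * X * Cᵀ + R).PosDef := Matrix.PosDef.posSemidef_add (psd_conj hX C) hR
  have hMdet : IsUnit (C * X * Cᵀ + R).det := (isUnit_iff_isUnit_det _).mp hM.isUnit
  have hMi1 : (C * X * Cᵀ + R)⁻¹ * (C * X * Cᵀ + R) = 1 := nonsing_inv_mul _ hMdet
  have hNs : ((C * X * Cᵀ + R)⁻¹)ᵀ = (C * X * Cᵀ + R)⁻¹ := by
    rw [transpose_nonsing_inv, sym_of_psd hM.posSemidef]
  have key := ric_alg X C ((C * X * Cᵀ + R)⁻¹) (C * X * Cᵀ + R) R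
    (X * Cᵀ * (C * X * Cᵀ + R)⁻¹) hXs hNs hMi1 rfl rfl
  have p1 : ((1 - X * Cᵀ * (C * X * Cᵀ + R)⁻¹ * C) * X
      * (1 - X * Cᵀ * (C * X * Cᵀ + R)⁻¹ * C)ᵀ).PosSemidef := psd_conj hX _
  have p2 : ((X * Cᵀ * (C * X * Cᵀ + R)⁻¹) * R
      * (X * Cᵀ * (C * X * Cᵀ + R)⁻¹)ᵀ).PosSemidef := psd_conj hR.posSemidef _
  refine ⟨by rw [key]; exact p1.add p2, fun x hx => ?_⟩
  rw [key] at hx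
  have h0 : x ⬝ᵥ (((1 - X * Cᵀ * (C * X * Cᵀ + R)⁻¹ * C) * X
        * (1 - X * Cᵀ * (C * X * Cᵀ + R)⁻¹ * C)ᵀ) *ᵥ x)
      + x ⬝ᵥ (((X * Cᵀ * (C * X * Cᵀ + R)⁻¹) * R
        * (X * Cᵀ * (C * X * Cᵀ + R)⁻¹)ᵀ) *ᵥ x) = 0 := by
    rw [← dotProduct_add, ← add_mulVec, hx, dotProduct_zero]
  have n1 := p1.dotProduct_mulVec_nonneg x
  have n2 := p2.dotProduct_mulVec_nonneg x
  simp only [star_trivial] at n1 n2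
  have z1 : x ⬝ᵥ (((1 - X * Cᵀ * (C * X * Cᵀ + R)⁻¹ * C) * X
      * (1 - X * Cᵀ * (C * X * Cᵀ + R)⁻¹ * C)ᵀ) *ᵥ x) = 0 := by linarith
  have z2 : x ⬝ᵥ (((X * Cᵀ * (C * X * Cᵀ + R)⁻¹) * R
      * (X * Cᵀ * (C * X * Cᵀ + R)⁻¹)ᵀ) *ᵥ x) = 0 := by linarith
  rw [quad_conj] at z2
  have hKx : (X * Cᵀ * (C * X * Cᵀ + R)⁻¹)ᵀ *ᵥ x = 0 := by
    by_contra h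
    have := hR.dotProduct_mulVec_pos h
    rw [star_trivial] at this
    exact this.ne' z2
  have hy : (1 - X * Cᵀ * (C * X * Cᵀ + R)⁻¹ * C)ᵀ *ᵥ x = x := by
    rw [transpose_sub, transpose_one, transpose_mul, sub_mulVec, one_mulVec,
      ← mulVec_mulVec, hKx, mulVec_zero, sub_zero]
  rw [quad_conj, hy] at z1
  exact (hX.dotProduct_mulVec_zero_iff x).mp (by simpa using z1)

lemma xi_psd (A : Matrix (Fin d) (Fin d) ℝ) (D : Matrix (Fin d) (Fin m) ℝ)
    {S : Matrix (Fin d) (Fin d) ℝ} (hS : S.PosSemidef) :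
    (D * Dᵀ + A * S * Aᵀ).PosSemidef := by
  have h1 : (D * Dᵀ).PosSemidef := by
    simpa [conjTranspose_eq_transpose_of_trivial] using posSemidef_self_mul_conjTranspose D
  have h2 : (A * S * Aᵀ).PosSemidef := by
    simpa [conjTranspose_eq_transpose_of_trivial] using hS.mul_mul_conjTranspose_same A
  exact h1.add h2

lemma xi_ker (A : Matrix (Fin d) (Fin d) ℝ) (D : Matrix (Fin d) (Fin m) ℝ)
    {S : Matrix (Fin d) (Fin d) ℝ} (hS : S.PosSemidef) {x : Fin d → ℝ}
    (hx : (D * Dᵀ + A * S * Aᵀ) *ᵥ x = 0) :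
    Dᵀ *ᵥ x = 0 ∧ S *ᵥ (Aᵀ *ᵥ x) = 0 := by
  have h1 : (D * Dᵀ).PosSemidef := by
    simpa [conjTranspose_eq_transpose_of_trivial] using posSemidef_self_mul_conjTranspose D
  have h2 : (A * S * Aᵀ).PosSemidef := by
    simpa [conjTranspose_eq_transpose_of_trivial] using hS.mul_mul_conjTranspose_same A
  have h0 : x ⬝ᵥ ((D * Dᵀ) *ᵥ x) + x ⬝ᵥ ((A * S * Aᵀ) *ᵥ x) = 0 := by
    rw [← dotProduct_add, ← add_mulVec, hx, dotProduct_zero]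
  have n1 : 0 ≤ x ⬝ᵥ ((D * Dᵀ) *ᵥ x) := by simpa using h1.dotProduct_mulVec_nonneg x
  have n2 : 0 ≤ x ⬝ᵥ ((A * S * Aᵀ) *ᵥ x) := by simpa using h2.dotProduct_mulVec_nonneg x
  have z1 : x ⬝ᵥ ((D * Dᵀ) *ᵥ x) = 0 := by linarith
  have z2 : x ⬝ᵥ ((A * S * Aᵀ) *ᵥ x) = 0 := by linarith
  constructor
  · have e : x ⬝ᵥ ((D * Dᵀ) *ᵥ x) = (Dᵀ *ᵥ x) ⬝ᵥ (Dᵀ *ᵥ x) := by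
      rw [← mulVec_mulVec, dotProduct_mulVec, ← mulVec_transpose]
    rw [e] at z1
    exact dotProduct_self_eq_zero.mp z1
  · rw [quad_conj] at z2
    exact (hS.dotProduct_mulVec_zero_iff (Aᵀ *ᵥ x)).mp (by simpa using z2)

lemma chain_lemma {d m : ℕ} (A : Matrix (Fin d) (Fin d) ℝ) (D : Matrix (Fin d) (Fin m) ℝ)
    (L : List (Matrix (Fin d) (Fin d) ℝ → Matrix (Fin d) (Fin d) ℝ))
    (hL : ∀ f ∈ L, ∀ S : Matrix (Fin d) (Fin d) ℝ, S.PosSemidef →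
      (f S).PosSemidef ∧ ∀ x, (f S) *ᵥ x = 0 → Dᵀ *ᵥ x = 0 ∧ S *ᵥ (Aᵀ *ᵥ x) = 0) :
    ∀ S, S.PosSemidef →
      (L.foldl (fun M f => f M) S).PosSemidef ∧
      ∀ x, (L.foldl (fun M f => f M) S) *ᵥ x = 0 →
        (∀ j < L.length, Dᵀ *ᵥ ((Aᵀ ^ j) *ᵥ x) = 0) ∧ S *ᵥ ((Aᵀ ^ L.length) *ᵥ x) = 0 := by
  induction L with
  | nil =>
    intro S hS
    refine ⟨hS, fun x hx => ⟨fun j hj => absurd hj (Nat.not_lt_zero j), ?_⟩⟩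
    simpa using hx
  | cons f t ih =>
    intro S hS
    have hf := hL f List.mem_cons_self S hS
    have ih' := ih (fun g hg => hL g (List.mem_cons_of_mem f hg)) (f S) hf.1
    rw [List.foldl_cons]
    refine ⟨ih'.1, fun x hx => ?_⟩
    obtain ⟨h1, h2⟩ := ih'.2 x hx
    obtain ⟨h3, h4⟩ := hf.2 _ h2
    constructor
    · intro j hj
      rw [List.length_cons] at hj
      rcases Nat.lt_succ_iff_lt_or_eq.mp hj with h | h
      · exact h1 j h
      · subst h; exact h3
    · rw [List.length_cons, pow_succ']
      rwa [mulVec_mulVec, mulVec_mulVec, Matrix.mul_assoc, ← mulVec_mulVec] at h4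

lemma ctrb_ker {d m : ℕ} (A : Matrix (Fin d) (Fin d) ℝ) (D : Matrix (Fin d) (Fin m) ℝ)
    (hctrb : (Matrix.of fun (i : Fin d) (jk : Fin d × Fin m) =>
        (A ^ (jk.1 : ℕ) * D) i jk.2).rank = d)
    (x : Fin d → ℝ) (hx : ∀ j : Fin d, Dᵀ *ᵥ ((Aᵀ ^ (j : ℕ)) *ᵥ x) = 0) : x = 0 := by
  set B := Matrix.of fun (i : Fin d) (jk : Fin d × Fin m) =>
    (A ^ (jk.1 : ℕ) * D) i jk.2 with hB
  have hsurj : Function.Surjective B.mulVecLin := by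
    rw [← LinearMap.range_eq_top]
    apply Submodule.eq_top_of_finrank_eq
    rw [show (Module.finrank ℝ ↥(LinearMap.range B.mulVecLin)) = B.rank from rfl, hctrb,
      Module.finrank_fin_fun]
  have hvB : x ᵥ* B = 0 := by
    funext jk
    have h1 : ((A ^ (jk.1 : ℕ) * D)ᵀ) *ᵥ x = 0 := by
      rw [transpose_mul, transpose_pow, ← mulVec_mulVec]
      exact hx jk.1
    have h2 := congrFun h1 jk.2
    simp only [mulVec, dotProduct, transpose_apply, Pi.zero_apply] at h2
    simp only [vecMul, dotProduct, hB, Matrix.of_apply, Pi.zero_apply]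
    rw [← h2]
    exact Finset.sum_congr rfl fun i _ => mul_comm _ _
  obtain ⟨v, hv⟩ := hsurj x
  have hz : x ⬝ᵥ x = 0 := by
    rw [mulVecLin_apply] at hv
    calc x ⬝ᵥ x = x ⬝ᵥ (B *ᵥ v) := by rw [hv]
    _ = (x ᵥ* B) ⬝ᵥ v := dotProduct_mulVec x B v
    _ = 0 := by rw [hvB, zero_dotProduct]
  exact dotProduct_self_eq_zero.mp hz


/-- If `(A, D)` is controllable, then the composition of any `d`
Riccati update maps (each either `S ↦ Ξ(S)` or
`S ↦ Ξ(S) − Ξ(S)Cᵀ(CΞ(S)Cᵀ + FFᵀ)⁻¹CΞ(S)` for some output matrices `C, F`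
with `FFᵀ` invertible and `DFᵀ = 0`), applied to any positive semidefinite `S`,
is positive definite; in particular its kernel is trivial. -/
theorem riccati_d_steps_posdef (d m : ℕ)
    (A : Matrix (Fin d) (Fin d) ℝ) (D : Matrix (Fin d) (Fin m) ℝ)
    -- controllability: the block matrix [D | AD | ⋯ | A^{d−1}D] has rank d
    (hctrb : (Matrix.of fun (i : Fin d) (jk : Fin d × Fin m) =>
        (A ^ (jk.1 : ℕ) * D) i jk.2).rank = d)
    (Xi : Matrix (Fin d) (Fin d) ℝ → Matrix (Fin d) (Fin d) ℝ)
    (hXi : ∀ S, Xi S = D * Dᵀ + A * S * Aᵀ)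
    (g : Fin d → (Matrix (Fin d) (Fin d) ℝ → Matrix (Fin d) (Fin d) ℝ))
    (hg : ∀ k : Fin d, g k = Xi ∨
      ∃ (p : ℕ) (C : Matrix (Fin p) (Fin d) ℝ) (F : Matrix (Fin p) (Fin m) ℝ),
        IsUnit (F * Fᵀ) ∧ D * Fᵀ = 0 ∧
        g k = fun S => Xi S - Xi S * Cᵀ * (C * Xi S * Cᵀ + F * Fᵀ)⁻¹ * C * Xi S)
    (S : Matrix (Fin d) (Fin d) ℝ) (hS : S.PosSemidef) :
    ((List.ofFn g).foldl (fun M f => f M) S).PosDef ∧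
    {x : Fin d → ℝ | ((List.ofFn g).foldl (fun M f => f M) S).mulVec x = 0} = {0} := by
  have hL : ∀ f ∈ List.ofFn g, ∀ T : Matrix (Fin d) (Fin d) ℝ, T.PosSemidef →
      (f T).PosSemidef ∧ ∀ x, (f T) *ᵥ x = 0 → Dᵀ *ᵥ x = 0 ∧ T *ᵥ (Aᵀ *ᵥ x) = 0 := by
    intro f hf T hT
    obtain ⟨k, hk⟩ := List.mem_ofFn.mp hf
    rcases hg k with h | ⟨p, C, F, hF, _hDF, h⟩
    · rw [← hk, h, hXi]
      exact ⟨xi_psd A D hT, fun x hx => xi_ker A D hT hx⟩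
    · have hRpsd : (F * Fᵀ).PosSemidef := by
        have := posSemidef_self_mul_conjTranspose F
        rwa [conjTranspose_eq_transpose_of_trivial] at this
      have hRpd : (F * Fᵀ).PosDef := by
        refine aux_posDef_of_ker hRpsd fun x hx => ?_
        have hdet : IsUnit (F * Fᵀ).det := (isUnit_iff_isUnit_det _).mp hF
        calc x = ((F * Fᵀ)⁻¹ * (F * Fᵀ)) *ᵥ x := by rw [nonsing_inv_mul _ hdet, one_mulVec]
        _ = (F * Fᵀ)⁻¹ *ᵥ ((F * Fᵀ) *ᵥ x) := by rw [mulVec_mulVec]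
        _ = 0 := by rw [hx, mulVec_zero]
      have hX : (D * Dᵀ + A * T * Aᵀ).PosSemidef := xi_psd A D hT
      have hr := ric_ker hX C hRpd
      rw [← hk, h]
      simp only [hXi]
      exact ⟨hr.1, fun x hx => xi_ker A D hT (hr.2 x hx)⟩
  have hchain := chain_lemma A D (List.ofFn g) hL S hS
  have hker : ∀ x, ((List.ofFn g).foldl (fun M f => f M) S) *ᵥ x = 0 → x = 0 := by
    intro x hx
    have h1 := (hchain.2 x hx).1
    rw [List.length_ofFn] at h1
    exact ctrb_ker A D hctrb x fun j => h1 (j : ℕ) j.isLt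
  refine ⟨aux_posDef_of_ker hchain.1 hker, ?_⟩
  ext x
  simp only [Set.mem_setOf_eq, Set.mem_singleton_iff]
  exact ⟨hker x, fun h => by rw [h]; exact mulVec_zero _⟩
end

section
/- Suppose a nonnegative function f* and a constant ϱ* satisfy the Bellman equation f*(z) + ϱ* = min_q {c_q(z) + 𝒯̂_q f*(z)} with c_q ≥ 0, and suppose there exist θ₁ ∈ (0,1), θ₂ > 0 with min_q c_q(z) ≥ θ₁ f*(z) − θ₂ for all z. Then for any selector q* of the minimizer, 𝒯̂_{q*} f*(z) ≤ (1−θ₁) f*(z) + (ϱ* + θ₂) for all z, and consequently the n-step expectation satisfies E^{q*}_z[f*(Z_n)] ≤ (ϱ* + θ₂)/θ₁ + (1−θ₁)ⁿ f*(z) for all n. -/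
/-- Given Markov operators `𝒯̂_q` and a nonnegative solution
`(f*, ϱ*)` of the Bellman equation `f* + ϱ* = min_q {c_q + 𝒯̂_q f*}` with
`min_q c_q ≥ θ₁ f* − θ₂`, any selector `q*` of the minimizer satisfies the
drift `𝒯̂_{q*} f* ≤ (1−θ₁) f* + (ϱ* + θ₂)`, and the `n`-step expectation
satisfies `E^{q*}_z[f*(Z_n)] ≤ (ϱ* + θ₂)/θ₁ + (1−θ₁)ⁿ f*(z)`. -/
theorem bellman_drift_and_moment {Z Q : Type*} [Fintype Q] [Nonempty Q]
    (That : Q → (Z → ℝ) → (Z → ℝ))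
    (hmono : ∀ (q : Q) (f g : Z → ℝ), (∀ z, f z ≤ g z) → ∀ z, That q f z ≤ That q g z)
    (hconst : ∀ (q : Q) (f : Z → ℝ) (a : ℝ),
      That q (fun z => f z + a) = fun z => That q f z + a)
    (hhom : ∀ (q : Q) (f : Z → ℝ) (r : ℝ), 0 ≤ r →
      That q (fun z => r * f z) = fun z => r * That q f z)
    (c : Q → Z → ℝ) (hc : ∀ q z, 0 ≤ c q z)
    (fstar : Z → ℝ) (hfstar : ∀ z, 0 ≤ fstar z) (ϱ : ℝ)
    (hbellman : ∀ z, fstar z + ϱ = ⨅ q, (c q z + That q fstar z))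
    (θ₁ θ₂ : ℝ) (hθ₁0 : 0 < θ₁) (hθ₁1 : θ₁ < 1) (hθ₂ : 0 < θ₂)
    (hcost : ∀ z, θ₁ * fstar z - θ₂ ≤ ⨅ q, c q z)
    (qs : Z → Q)
    (hsel : ∀ z, c (qs z) z + That (qs z) fstar z = fstar z + ϱ) :
    (∀ z, (fun g (z' : Z) => That (qs z') g z') fstar z ≤
        (1 - θ₁) * fstar z + (ϱ + θ₂)) ∧
    (∀ (n : ℕ) (z : Z),
      (fun g (z' : Z) => That (qs z') g z')^[n] fstar z ≤
        (ϱ + θ₂) / θ₁ + (1 - θ₁) ^ n * fstar z) := by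
  set r : ℝ := 1 - θ₁ with hr
  have hr0 : 0 < r := by simp [hr]; linarith
  have hr1 : r < 1 := by simp [hr]; linarith
  set T : (Z → ℝ) → (Z → ℝ) := fun g (z' : Z) => That (qs z') g z' with hT
  -- drift inequality
  have drift : ∀ z, That (qs z) fstar z ≤ r * fstar z + (ϱ + θ₂) := by
    intro z
    have h1 : c (qs z) z ≥ θ₁ * fstar z - θ₂ := by
      refine le_trans (hcost z) ?_
      exact ciInf_le (Finite.bddBelow_range _) (qs z)
    have h2 := hsel z
    simp only [hr]; linarith
  -- T of zero function is zero
  have Tzero : ∀ z, That (qs z) (fun _ => (0:ℝ)) z = 0 := by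
    intro z
    have h := congrFun (hhom (qs z) fstar 0 le_rfl) z
    simpa using h
  -- affine property
  have affine : ∀ (q : Q) (f : Z → ℝ) (s a : ℝ), 0 ≤ s → ∀ z,
      That q (fun z' => s * f z' + a) z = s * That q f z + a := by
    intro q f s a hs z
    have h1 := congrFun (hconst q (fun z' => s * f z') a) z
    have h2 := congrFun (hhom q f s hs) z
    rw [h1, h2]
  -- main induction
  have main : ∀ n z, 0 ≤ T^[n] fstar z ∧
      T^[n] fstar z ≤ (ϱ + θ₂) * (1 - r ^ n) / θ₁ + r ^ n * fstar z := by
    intro n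
    induction n with
    | zero => intro z; simpa using hfstar z
    | succ n ih =>
      intro z
      have hiter : T^[n+1] fstar = T (T^[n] fstar) := Function.iterate_succ_apply' T n fstar
      have hnn : ∀ z', 0 ≤ T^[n] fstar z' := fun z' => (ih z').1
      constructor
      · rw [hiter]
        have := hmono (qs z) (fun _ => (0:ℝ)) (T^[n] fstar) hnn z
        rw [Tzero z] at this
        exact this
      · rw [hiter]
        have hrn : (0:ℝ) ≤ r ^ n := le_of_lt (pow_pos hr0 n)
        have hub : ∀ z', T^[n] fstar z' ≤
            r ^ n * fstar z' + (ϱ + θ₂) * (1 - r ^ n) / θ₁ := by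
          intro z'; have := (ih z').2; linarith
        have h1 : T (T^[n] fstar) z ≤
            That (qs z) (fun z' => r ^ n * fstar z' + (ϱ + θ₂) * (1 - r ^ n) / θ₁) z :=
          hmono (qs z) _ _ hub z
        rw [affine (qs z) fstar (r ^ n) _ hrn z] at h1
        have h2 : r ^ n * That (qs z) fstar z ≤ r ^ n * (r * fstar z + (ϱ + θ₂)) :=
          mul_le_mul_of_nonneg_left (drift z) hrn
        have halg : r ^ n * (r * fstar z + (ϱ + θ₂)) + (ϱ + θ₂) * (1 - r ^ n) / θ₁
            = (ϱ + θ₂) * (1 - r ^ (n + 1)) / θ₁ + r ^ (n + 1) * fstar z := by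
          have hθne : θ₁ ≠ 0 := ne_of_gt hθ₁0
          have : r ^ (n+1) = r ^ n * r := pow_succ r n
          field_simp [this, hr]
          ring
        calc T (T^[n] fstar) z ≤ r ^ n * That (qs z) fstar z + (ϱ + θ₂) * (1 - r ^ n) / θ₁ := h1
          _ ≤ r ^ n * (r * fstar z + (ϱ + θ₂)) + (ϱ + θ₂) * (1 - r ^ n) / θ₁ :=
              add_le_add_left h2 _
          _ = (ϱ + θ₂) * (1 - r ^ (n + 1)) / θ₁ + r ^ (n + 1) * fstar z := halg
  refine ⟨fun z => by simpa using drift z, ?_⟩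
  rcases isEmpty_or_nonempty Z with hZ | hZ
  · intro n z; exact (hZ.false z).elim
  · -- derive ϱ + θ₂ ≥ 0
    obtain ⟨z0⟩ := hZ
    have hnn : ∀ n : ℕ, 0 ≤ (ϱ + θ₂) * (1 - r ^ n) / θ₁ + r ^ n * fstar z0 := by
      intro n
      exact le_trans (main n z0).1 (main n z0).2
    have hlim : Filter.Tendsto (fun n : ℕ => (ϱ + θ₂) * (1 - r ^ n) / θ₁ + r ^ n * fstar z0)
        Filter.atTop (nhds ((ϱ + θ₂) / θ₁)) := by
      have hpow : Filter.Tendsto (fun n : ℕ => r ^ n) Filter.atTop (nhds 0) :=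
        tendsto_pow_atTop_nhds_zero_of_lt_one (le_of_lt hr0) hr1
      have : Filter.Tendsto (fun n : ℕ => (ϱ + θ₂) * (1 - r ^ n) / θ₁ + r ^ n * fstar z0)
          Filter.atTop (nhds ((ϱ + θ₂) * (1 - 0) / θ₁ + 0 * fstar z0)) := by
        exact (((tendsto_const_nhds.sub hpow).const_mul (ϱ + θ₂)).div_const θ₁).add
          (hpow.mul tendsto_const_nhds)
      simpa using this
    have hϱθ : 0 ≤ (ϱ + θ₂) / θ₁ := ge_of_tendsto hlim (Filter.Eventually.of_forall hnn)
    have hϱθ' : 0 ≤ ϱ + θ₂ := by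
      by_contra h
      push_neg at h
      have : (ϱ + θ₂) / θ₁ < 0 := div_neg_of_neg_of_pos h hθ₁0
      linarith
    intro n z
    have := (main n z).2
    have hrn1 : r ^ n ≤ 1 := pow_le_one₀ (le_of_lt hr0) (le_of_lt hr1)
    have hrn0 : (0:ℝ) ≤ r ^ n := (pow_pos hr0 n).le
    have hmul : (ϱ + θ₂) * (1 - r ^ n) ≤ ϱ + θ₂ := by
      nlinarith [mul_le_mul_of_nonneg_left (show 1 - r ^ n ≤ 1 by linarith) hϱθ']
    have hfin : (ϱ + θ₂) * (1 - r ^ n) / θ₁ ≤ (ϱ + θ₂) / θ₁ :=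
      (div_le_div_iff_of_pos_right hθ₁0).mpr hmul
    linarith
end

section
/- Value iteration bounds: under the Bellman equation f* + ϱ* = min_q{c_q + 𝒯̂_q f*} with the drift bounds 𝒯̂_{q*}f* ≤ ρ f* + (ϱ* + θ₂) where ρ = 1 − θ₁, and with φ₀ nonnegative satisfying φ₀ ≤ κ f* for κ = ‖φ₀‖_{f*}, the value iteration iterates satisfy (1 − ρⁿ)(f*(z) − δ) ≤ φ_n(z) ≤ f*(z) + ((κ − 1) ∨ 0)(δ + ρⁿ f*(z)) for all n and z, where δ = (ϱ* + θ₂)/θ₁. -/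
/-- value iteration bounds. Under the Bellman equation with the
cost bound `min_q c_q ≥ θ₁ f* − θ₂`, the drift `𝒯̂_{q*} f* ≤ ρ f* + (ϱ*+θ₂)`
(`ρ = 1 − θ₁`), and a nonnegative initial condition `φ₀ ≤ κ f*`, the value
iteration iterates satisfy
`(1 − ρⁿ)(f* − δ) ≤ φ_n ≤ f* + ((κ−1) ∨ 0)(δ + ρⁿ f*)`, `δ = (ϱ*+θ₂)/θ₁`. -/
theorem value_iteration_bounds {Z Q : Type*} [Fintype Q] [Nonempty Q]
    (That : Q → (Z → ℝ) → (Z → ℝ))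
    (hmono : ∀ (q : Q) (f g : Z → ℝ), (∀ z, f z ≤ g z) → ∀ z, That q f z ≤ That q g z)
    (hadd : ∀ (q : Q) (f g : Z → ℝ),
      That q (fun z => f z + g z) = fun z => That q f z + That q g z)
    (hconst : ∀ (q : Q) (a : ℝ), That q (fun _ => a) = fun _ => a)
    (hhom : ∀ (q : Q) (f : Z → ℝ) (r : ℝ), 0 ≤ r →
      That q (fun z => r * f z) = fun z => r * That q f z)
    (c : Q → Z → ℝ) (hc : ∀ q z, 0 ≤ c q z)
    (fstar : Z → ℝ) (hfstar : ∀ z, 0 ≤ fstar z) (ϱ : ℝ)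
    (hbellman : ∀ z, fstar z + ϱ = ⨅ q, (c q z + That q fstar z))
    (θ₁ θ₂ : ℝ) (hθ₁0 : 0 < θ₁) (hθ₁1 : θ₁ < 1) (hθ₂ : 0 ≤ θ₂)
    (hcost : ∀ z, θ₁ * fstar z - θ₂ ≤ ⨅ q, c q z)
    (ρ δ : ℝ) (hρ : ρ = 1 - θ₁) (hδ : δ = (ϱ + θ₂) / θ₁)
    (qstar : Z → Q)
    (hqstar : ∀ z, c (qstar z) z + That (qstar z) fstar z = fstar z + ϱ)
    (hdrift : ∀ z, That (qstar z) fstar z ≤ ρ * fstar z + (ϱ + θ₂))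
    (φ : ℕ → Z → ℝ)
    (hVI : ∀ n z, φ (n + 1) z = (⨅ q, (c q z + That q (φ n) z)) - ϱ)
    (κ : ℝ) (hφ0 : ∀ z, 0 ≤ φ 0 z) (hφ0κ : ∀ z, φ 0 z ≤ κ * fstar z) :
    ∀ (n : ℕ) (z : Z),
      (1 - ρ ^ n) * (fstar z - δ) ≤ φ n z ∧
      φ n z ≤ fstar z + (max (κ - 1) 0) * (δ + ρ ^ n * fstar z) := by
  intro n z
  have hZ : Nonempty Z := ⟨z⟩
  have hρpos : 0 < ρ := by rw [hρ]; linarith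
  have hρlt1 : ρ < 1 := by rw [hρ]; linarith
  have hθρ : θ₁ = 1 - ρ := by rw [hρ]; ring
  have hθδ : θ₁ * δ = ϱ + θ₂ := by rw [hδ]; field_simp
  have hϱθ : ϱ + θ₂ = (1 - ρ) * δ := by rw [← hθρ]; linarith
  set M : ℝ := max (κ - 1) 0 with hMdef
  have hM0 : (0 : ℝ) ≤ M := le_max_right _ _
  have hκM : κ ≤ 1 + M := by have := le_max_left (κ - 1) 0; linarith
  -- affine transformation of That
  have haff : ∀ (q : Q) (g : Z → ℝ) (r b : ℝ), 0 ≤ r →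
      ∀ w, That q (fun w => r * g w + b) w = r * That q g w + b := by
    intro q g r b hr w
    have h1 := congrFun (hadd q (fun w => r * g w) (fun _ => b)) w
    have h2 := congrFun (hhom q g r hr) w
    have h3 := congrFun (hconst q b) w
    rw [h1, h2, h3]
  -- δ ≥ 0
  have hδ0 : 0 ≤ δ := by
    have hθ0 : 0 ≤ ϱ + θ₂ := by
      by_contra h
      push_neg at h
      set m : ℝ := ⨅ w, fstar w with hmdef
      have hbdd : BddBelow (Set.range fstar) := ⟨0, by rintro x ⟨w, rfl⟩; exact hfstar w⟩
      have hm0 : 0 ≤ m := le_ciInf fun w => hfstar w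
      have hε : 0 < -(ϱ + θ₂) / (2 * ρ) := div_pos (by linarith) (by linarith)
      obtain ⟨z', hz'⟩ := exists_lt_of_ciInf_lt
        (show m < m + -(ϱ + θ₂) / (2 * ρ) by linarith)
      have hmle : ∀ w, m ≤ fstar w := fun w => ciInf_le hbdd w
      have hTm : m ≤ That (qstar z') fstar z' := by
        have := hmono (qstar z') (fun _ => m) fstar hmle z'
        rwa [congrFun (hconst (qstar z') m) z'] at this
      have hd := hdrift z'
      have hmul : ρ * fstar z' < ρ * (m + -(ϱ + θ₂) / (2 * ρ)) :=
        mul_lt_mul_of_pos_left hz' hρpos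
      have hre : ρ * (m + -(ϱ + θ₂) / (2 * ρ)) = ρ * m + -(ϱ + θ₂) / 2 := by
        field_simp
      have hθm : 0 ≤ θ₁ * m := mul_nonneg hθ₁0.le hm0
      have hmm : m - ρ * m = θ₁ * m := by rw [hθρ]; ring
      linarith
    rw [hδ]; exact div_nonneg hθ0 hθ₁0.le
  -- key inductive bounds (strengthened upper bound)
  have key : ∀ (k : ℕ) (w : Z),
      (1 - ρ ^ k) * (fstar w - δ) ≤ φ k w ∧
      φ k w ≤ fstar w + M * ((1 - ρ ^ k) * δ + ρ ^ k * fstar w) := by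
    intro k
    induction k with
    | zero =>
      intro w
      constructor
      · simpa using hφ0 w
      · have h1 := hφ0κ w
        have h2 : κ * fstar w ≤ (1 + M) * fstar w :=
          mul_le_mul_of_nonneg_right hκM (hfstar w)
        simp only [pow_zero]
        nlinarith [hfstar w]
    | succ k ih =>
      intro w
      have hρk0 : (0 : ℝ) ≤ ρ ^ k := (pow_pos hρpos k).le
      have hρk1 : ρ ^ k ≤ 1 := pow_le_one₀ hρpos.le hρlt1.le
      have hϱ' : ϱ = (1 - ρ) * δ - θ₂ := by linarith
      constructor
      · -- lower bound
        have hlow : ∀ q, (1 - ρ ^ (k + 1)) * (fstar w - δ) + ϱ ≤ c q w + That q (φ k) w := by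
          intro q
          have h1 : ∀ u, (1 - ρ ^ k) * fstar u + (-((1 - ρ ^ k) * δ)) ≤ φ k u := by
            intro u
            have := (ih u).1
            have heq : (1 - ρ ^ k) * (fstar u - δ)
                = (1 - ρ ^ k) * fstar u + (-((1 - ρ ^ k) * δ)) := by ring
            linarith
          have h2 := hmono q _ (φ k) h1 w
          rw [haff q fstar (1 - ρ ^ k) (-((1 - ρ ^ k) * δ)) (by linarith) w] at h2
          have h3 : fstar w + ϱ ≤ c q w + That q fstar w := by
            rw [hbellman w]
            exact ciInf_le (Set.finite_range _).bddBelow q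
          have h4 : θ₁ * fstar w - θ₂ ≤ c q w :=
            le_trans (hcost w) (ciInf_le (Set.finite_range _).bddBelow q)
          have h5 : (1 - ρ ^ k) * (fstar w + ϱ) ≤ (1 - ρ ^ k) * (c q w + That q fstar w) :=
            mul_le_mul_of_nonneg_left h3 (by linarith)
          have h6 : ρ ^ k * (θ₁ * fstar w - θ₂) ≤ ρ ^ k * c q w :=
            mul_le_mul_of_nonneg_left h4 hρk0
          have hid : (1 - ρ ^ (k + 1)) * (fstar w - δ) + ϱ
              = (1 - ρ ^ k) * (fstar w + ϱ) + ρ ^ k * (θ₁ * fstar w - θ₂)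
                - (1 - ρ ^ k) * δ := by
            rw [hϱ', hθρ, pow_succ]; ring
          have hexp : (1 - ρ ^ k) * (c q w + That q fstar w) + ρ ^ k * c q w
              = c q w + ((1 - ρ ^ k) * That q fstar w + (-((1 - ρ ^ k) * δ)))
                + (1 - ρ ^ k) * δ := by ring
          linarith
        have hlow2 : (1 - ρ ^ (k + 1)) * (fstar w - δ) + ϱ
            ≤ ⨅ q, (c q w + That q (φ k) w) := le_ciInf hlow
        rw [hVI k w]
        linarith
      · -- upper bound
        have hub : φ (k + 1) w ≤ c (qstar w) w + That (qstar w) (φ k) w - ϱ := by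
          rw [hVI k w]
          have := ciInf_le (Set.finite_range fun q => c q w + That q (φ k) w).bddBelow (qstar w)
          linarith
        have h1 : ∀ u, φ k u ≤ (1 + M * ρ ^ k) * fstar u + (M * (1 - ρ ^ k) * δ) := by
          intro u
          have := (ih u).2
          have heq : fstar u + M * ((1 - ρ ^ k) * δ + ρ ^ k * fstar u)
              = (1 + M * ρ ^ k) * fstar u + (M * (1 - ρ ^ k) * δ) := by ring
          linarith
        have h2 := hmono (qstar w) (φ k) _ h1 w
        rw [haff (qstar w) fstar (1 + M * ρ ^ k) (M * (1 - ρ ^ k) * δ)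
          (by nlinarith) w] at h2
        have h3 := hqstar w
        have h4 := hdrift w
        have h5 : (M * ρ ^ k) * That (qstar w) fstar w
            ≤ (M * ρ ^ k) * (ρ * fstar w + (ϱ + θ₂)) :=
          mul_le_mul_of_nonneg_left h4 (mul_nonneg hM0 hρk0)
        have h2' : That (qstar w) (φ k) w
            ≤ That (qstar w) fstar w + (M * ρ ^ k) * That (qstar w) fstar w
              + M * (1 - ρ ^ k) * δ := by
          have heq : (1 + M * ρ ^ k) * That (qstar w) fstar w + M * (1 - ρ ^ k) * δ
              = That (qstar w) fstar w + (M * ρ ^ k) * That (qstar w) fstar w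
                + M * (1 - ρ ^ k) * δ := by ring
          linarith
        have hid2 : fstar w + (M * ρ ^ k) * (ρ * fstar w + (ϱ + θ₂)) + M * (1 - ρ ^ k) * δ
            = fstar w + M * ((1 - ρ ^ (k + 1)) * δ + ρ ^ (k + 1) * fstar w) := by
          rw [hϱθ, pow_succ]; ring
        linarith
  obtain ⟨hl, hu⟩ := key n z
  refine ⟨hl, ?_⟩
  have hρn0 : (0 : ℝ) ≤ ρ ^ n := (pow_pos hρpos n).le
  have hmono' : M * ((1 - ρ ^ n) * δ + ρ ^ n * fstar z) ≤ M * (δ + ρ ^ n * fstar z) := by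
    apply mul_le_mul_of_nonneg_left _ hM0
    nlinarith [mul_nonneg hρn0 hδ0]
  linarith
end

section
/- Stability of rolling-horizon policies: with ρ = 1 − θ₁ ∈ (0,1) and the value iteration bounds (1−ρⁿ)(f* − δ) ≤ φ_n ≤ f* (taking φ₀ = 0), if n > log θ₁ / log(1−θ₁) then ρ/(1 − ρⁿ) < 1, and the stage-n minimizing selector q_n satisfies the Foster–Lyapunov drift inequality 𝒯̂_{q_n} f* ≤ (ρ/(1 − ρⁿ)) f* + δ(1 + (1−ρ)/(1−ρⁿ)). -/

lemma Tzero {Z : Type*} (T : (Z → ℝ) → (Z → ℝ))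
    (hadd : ∀ f g : Z → ℝ, T (fun z => f z + g z) = fun z => T f z + T g z)
    (z : Z) : T (fun _ => (0:ℝ)) z = 0 := by
  have h := hadd (fun _ => (0:ℝ)) (fun _ => (0:ℝ))
  simp only [add_zero] at h
  have := congrFun h z
  linarith

lemma Tnat {Z : Type*} (T : (Z → ℝ) → (Z → ℝ))
    (hadd : ∀ f g : Z → ℝ, T (fun z => f z + g z) = fun z => T f z + T g z)
    (m : ℕ) (f : Z → ℝ) (z : Z) :
    T (fun z => (m:ℝ) * f z) z = (m:ℝ) * T f z := by
  induction m with
  | zero => simpa using Tzero T hadd z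
  | succ k ih =>
    have h1 : (fun z => ((k:ℝ)+1) * f z) = fun z => f z + (k:ℝ) * f z := by
      funext z; ring
    push_cast
    rw [h1, hadd]
    simp only
    rw [ih]; ring

lemma Trat {Z : Type*} (T : (Z → ℝ) → (Z → ℝ))
    (hadd : ∀ f g : Z → ℝ, T (fun z => f z + g z) = fun z => T f z + T g z)
    (r : ℚ) (hr : 0 ≤ r) (f : Z → ℝ) (z : Z) :
    T (fun z => (r:ℝ) * f z) z = (r:ℝ) * T f z := by
  have hden : (0:ℝ) < (r.den : ℝ) := by exact_mod_cast r.pos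
  have hnum : ((r.num.toNat : ℤ) : ℝ) = (r.num : ℝ) := by
    exact_mod_cast Int.toNat_of_nonneg (Rat.num_nonneg.mpr hr)
  have hcast : (r:ℝ) = (r.num.toNat : ℝ) / (r.den : ℝ) := by
    rw [Rat.cast_def]; rw [hnum.symm]; push_cast; ring
  have key : (r.den : ℝ) * T (fun z => (r:ℝ) * f z) z = (r.den : ℝ) * ((r:ℝ) * T f z) := by
    have h1 : (fun z => (r.den : ℝ) * ((r:ℝ) * f z)) = fun z => (r.num.toNat : ℝ) * f z := by
      funext z; rw [hcast]; field_simp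
    calc (r.den : ℝ) * T (fun z => (r:ℝ) * f z) z
        = T (fun z => (r.den : ℝ) * ((r:ℝ) * f z)) z := (Tnat T hadd r.den _ z).symm
      _ = T (fun z => (r.num.toNat : ℝ) * f z) z := by rw [h1]
      _ = (r.num.toNat : ℝ) * T f z := Tnat T hadd r.num.toNat f z
      _ = (r.den : ℝ) * ((r:ℝ) * T f z) := by rw [hcast]; field_simp
  exact mul_left_cancel₀ (ne_of_gt hden) key

lemma Thomog_le {Z : Type*} (T : (Z → ℝ) → (Z → ℝ))
    (hmono : ∀ f g : Z → ℝ, (∀ z, f z ≤ g z) → ∀ z, T f z ≤ T g z)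
    (hadd : ∀ f g : Z → ℝ, T (fun z => f z + g z) = fun z => T f z + T g z)
    (f : Z → ℝ) (hf : ∀ z, 0 ≤ f z) (t : ℝ) (ht : 0 ≤ t) (z : Z) :
    T (fun z => t * f z) z ≤ t * T f z := by
  have hTf : 0 ≤ T f z := by
    have := hmono (fun _ => (0:ℝ)) f (by simpa using hf) z
    rwa [Tzero T hadd z] at this
  refine le_of_forall_pos_le_add (fun ε hε => ?_)
  set ε' := ε / (T f z + 1) with hε'
  have hε'pos : 0 < ε' := div_pos hε (by linarith)
  obtain ⟨r, hr1, hr2⟩ := exists_rat_btwn (lt_add_of_pos_right t hε'pos)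
  have hr0 : (0:ℚ) ≤ r := by exact_mod_cast le_of_lt (lt_of_le_of_lt ht hr1)
  have step1 : T (fun z => t * f z) z ≤ T (fun z => (r:ℝ) * f z) z := by
    apply hmono
    intro z
    exact mul_le_mul_of_nonneg_right (le_of_lt hr1) (hf z)
  rw [Trat T hadd r hr0 f z] at step1
  have step2 : (r:ℝ) * T f z ≤ (t + ε') * T f z :=
    mul_le_mul_of_nonneg_right (le_of_lt hr2) hTf
  have step3 : ε' * T f z ≤ ε := by
    rw [hε']
    rw [div_mul_eq_mul_div, div_le_iff₀ (by linarith : (0:ℝ) < T f z + 1)]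
    nlinarith
  nlinarith

/-- stability of rolling-horizon policies. With `ρ = 1 − θ₁` and
the value-iteration bounds `(1−ρⁿ)(f* − δ) ≤ φ_n ≤ f*` (initialization
`φ₀ = 0`), if `n > log θ₁ / log(1−θ₁)`, then `ρ/(1−ρⁿ) < 1`, and the
stage-`n` minimizing selector `q_n` satisfies the Foster–Lyapunov drift
`𝒯̂_{q_n} f* ≤ (ρ/(1−ρⁿ)) f* + δ(1 + (1−ρ)/(1−ρⁿ))`. -/
theorem rolling_horizon_stability {Z Q : Type*} [Fintype Q] [Nonempty Q]
    (That : Q → (Z → ℝ) → (Z → ℝ))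
    (hmono : ∀ (q : Q) (f g : Z → ℝ), (∀ z, f z ≤ g z) → ∀ z, That q f z ≤ That q g z)
    (hadd : ∀ (q : Q) (f g : Z → ℝ),
      That q (fun z => f z + g z) = fun z => That q f z + That q g z)
    (hconst : ∀ (q : Q) (a : ℝ), That q (fun _ => a) = fun _ => a)
    (c : Q → Z → ℝ) (hc : ∀ q z, 0 ≤ c q z)
    (fstar : Z → ℝ) (hfstar : ∀ z, 0 ≤ fstar z) (ϱ : ℝ)
    (hbellman : ∀ z, fstar z + ϱ = ⨅ q, (c q z + That q fstar z))
    (θ₁ θ₂ : ℝ) (hθ₁0 : 0 < θ₁) (hθ₁1 : θ₁ < 1) (hθ₂ : 0 ≤ θ₂)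
    (hcost : ∀ z, θ₁ * fstar z - θ₂ ≤ ⨅ q, c q z)
    (ρ δ : ℝ) (hρ : ρ = 1 - θ₁) (hδ : δ = (ϱ + θ₂) / θ₁)
    (φ : ℕ → Z → ℝ) (hφ0 : ∀ z, φ 0 z = 0)
    (hVI : ∀ n z, φ (n + 1) z = (⨅ q, (c q z + That q (φ n) z)) - ϱ)
    (qn : ℕ → Z → Q)
    (hqn : ∀ n z, c (qn n z) z + That (qn n z) (φ n) z =
      ⨅ q, (c q z + That q (φ n) z))
    (hsandwich : ∀ n z, (1 - ρ ^ n) * (fstar z - δ) ≤ φ n z ∧ φ n z ≤ fstar z)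
    (n : ℕ) (hn : Real.log θ₁ / Real.log (1 - θ₁) < (n : ℝ)) :
    ρ / (1 - ρ ^ n) < 1 ∧
    ∀ z, That (qn n z) fstar z ≤
      (ρ / (1 - ρ ^ n)) * fstar z + δ * (1 + (1 - ρ) / (1 - ρ ^ n)) := by
  have hρ0 : 0 < ρ := by rw [hρ]; linarith
  have hρ1 : ρ < 1 := by rw [hρ]; linarith
  have hlogρ : Real.log (1 - θ₁) < 0 := Real.log_neg (by linarith) (by linarith)
  -- ρ^n < θ₁
  have hρn : ρ ^ n < θ₁ := by
    have h1 : (n : ℝ) * Real.log (1 - θ₁) < Real.log θ₁ := by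
      rw [div_lt_iff_of_neg hlogρ] at hn
      linarith
    have h2 : Real.log (ρ ^ n) < Real.log θ₁ := by
      rw [hρ] at *
      rw [Real.log_pow]
      exact_mod_cast h1
    have := (Real.log_lt_log_iff (pow_pos hρ0 n) hθ₁0).mp h2
    exact this
  have hA : 0 < 1 - ρ ^ n := by linarith
  constructor
  · rw [div_lt_one hA]; linarith [hρn]
  intro z
  set q := qn n z with hq
  -- T φ_n z = φ_{n+1} z + ϱ - c q z
  have hid : That q (φ n) z = φ (n + 1) z + ϱ - c q z := by
    have h1 := hqn n z
    have h2 := hVI n z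
    rw [← h1] at h2
    linarith
  -- splitting fstar = φ n + (fstar - φ n)
  have hsplit : That q fstar z = That q (φ n) z + That q (fun z => fstar z - φ n z) z := by
    have : fstar = fun z => φ n z + (fstar z - φ n z) := by funext z; ring
    conv_lhs => rw [this]
    rw [hadd]
  -- bound T (fstar - φ n) z
  have hgub : ∀ z', fstar z' - φ n z' ≤ ρ ^ n * fstar z' + (1 - ρ ^ n) * δ := by
    intro z'
    have := (hsandwich n z').1
    nlinarith
  have hbound : That q (fun z => fstar z - φ n z) z ≤
      ρ ^ n * That q fstar z + (1 - ρ ^ n) * δ := by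
    have h1 : That q (fun z => fstar z - φ n z) z ≤
        That q (fun z' => ρ ^ n * fstar z' + (1 - ρ ^ n) * δ) z :=
      hmono q _ _ hgub z
    have h2 : That q (fun z' => ρ ^ n * fstar z' + (1 - ρ ^ n) * δ) z =
        That q (fun z' => ρ ^ n * fstar z') z + (1 - ρ ^ n) * δ := by
      have := hadd q (fun z' => ρ ^ n * fstar z') (fun _ => (1 - ρ ^ n) * δ)
      have hc2 := hconst q ((1 - ρ ^ n) * δ)
      calc That q (fun z' => ρ ^ n * fstar z' + (1 - ρ ^ n) * δ) z
          = That q (fun z' => ρ ^ n * fstar z') z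
            + That q (fun _ => (1 - ρ ^ n) * δ) z := congrFun this z
        _ = That q (fun z' => ρ ^ n * fstar z') z + (1 - ρ ^ n) * δ := by
            rw [hc2]
    have h3 : That q (fun z' => ρ ^ n * fstar z') z ≤ ρ ^ n * That q fstar z :=
      Thomog_le (That q) (hmono q) (hadd q) fstar hfstar (ρ ^ n) (le_of_lt (pow_pos hρ0 n)) z
    linarith
  -- c q z ≥ θ₁ fstar z - θ₂
  have hcq : θ₁ * fstar z - θ₂ ≤ c q z := by
    have h1 : (⨅ q', c q' z) ≤ c q z :=
      ciInf_le (Finite.bddBelow_range _) q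
    exact le_trans (hcost z) h1
  have hφ1 : φ (n + 1) z ≤ fstar z := (hsandwich (n + 1) z).2
  have hθδ : θ₁ * δ = ϱ + θ₂ := by
    rw [hδ]; field_simp
  have hkey : That q fstar z * (1 - ρ ^ n) ≤
      (1 - θ₁) * fstar z + θ₁ * δ + (1 - ρ ^ n) * δ := by
    have hthis := hsplit
    rw [hid] at hthis
    nlinarith [hbound, hcq, hφ1, hθδ, hthis]
  have e1 : (1:ℝ) - θ₁ = ρ := hρ.symm
  have h1θ : (1:ℝ) - ρ = θ₁ := by rw [hρ]; ring
  rw [e1, ← h1θ] at hkey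
  calc That q fstar z
      ≤ (ρ * fstar z + (1 - ρ) * δ + (1 - ρ ^ n) * δ) / (1 - ρ ^ n) :=
        (le_div_iff₀ hA).mpr hkey
    _ = ρ / (1 - ρ ^ n) * fstar z + δ * (1 + (1 - ρ) / (1 - ρ ^ n)) := by
        field_simp; ring
end

section
/- For the trace function, the difference of intermittent operators at loss rates λ ≤ λ′ is explicitly 𝒯̂_q^{λ} tr(Σ) − 𝒯̂_q^{λ′} tr(Σ) = −(λ′_q − λ_q) · tr(K_q(Σ) C_q Ξ(Σ)) ≤ 0, where K_q(Σ)C_qΞ(Σ) is positive semidefinite. -/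
open Matrix

lemma psd_trace_nonneg {n : ℕ} {A : Matrix (Fin n) (Fin n) ℝ}
    (hA : A.PosSemidef) : 0 ≤ A.trace := by
  rw [Matrix.trace]
  apply Finset.sum_nonneg
  intro i _
  exact hA.diag_nonneg

/-- for the trace function, the difference of intermittent
operators at loss rates `λ ≤ λ'` is explicitly
`𝒯̂_q^λ tr(S) − 𝒯̂_q^{λ'} tr(S) = −(λ'_q − λ_q)·tr(K_q(S) C_q Ξ(S)) ≤ 0`,
where `K_q(S)C_qΞ(S) = Ξ(S)C_qᵀ(C_qΞ(S)C_qᵀ + F_qF_qᵀ)⁻¹C_qΞ(S)` is positive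
semidefinite. -/
theorem loss_rate_trace_difference {Q : Type*} (d m p : ℕ)
    (A : Matrix (Fin d) (Fin d) ℝ) (D : Matrix (Fin d) (Fin m) ℝ)
    (C : Q → Matrix (Fin p) (Fin d) ℝ) (F : Q → Matrix (Fin p) (Fin m) ℝ)
    (hF : ∀ q, (F q * (F q)ᵀ).PosDef) (hDF : ∀ q, D * (F q)ᵀ = 0)
    (Xi : Matrix (Fin d) (Fin d) ℝ → Matrix (Fin d) (Fin d) ℝ)
    (hXi : ∀ S, Xi S = D * Dᵀ + A * S * Aᵀ)
    (K : Q → Matrix (Fin d) (Fin d) ℝ → Matrix (Fin d) (Fin p) ℝ)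
    (hK : ∀ q S, K q S = Xi S * (C q)ᵀ * (C q * Xi S * (C q)ᵀ + F q * (F q)ᵀ)⁻¹)
    (T : Q → Matrix (Fin d) (Fin d) ℝ → Matrix (Fin d) (Fin d) ℝ)
    (hT : ∀ q S, T q S = Xi S - K q S * C q * Xi S)
    (lam lam' : Q → ℝ)
    (hlam0 : ∀ q, 0 ≤ lam q) (hlam1 : ∀ q, lam' q ≤ 1)
    (hle : ∀ q, lam q ≤ lam' q)
    (q : Q) (S : Matrix (Fin d) (Fin d) ℝ) (hS : S.PosSemidef) :
    (K q S * C q * Xi S).PosSemidef ∧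
    ((1 - lam q) * (T q S).trace + lam q * (Xi S).trace)
      - ((1 - lam' q) * (T q S).trace + lam' q * (Xi S).trace)
      = -((lam' q - lam q) * (K q S * C q * Xi S).trace) ∧
    -((lam' q - lam q) * (K q S * C q * Xi S).trace) ≤ 0 := by

  have hXiS : (Xi S).PosSemidef := by
    rw [hXi]
    have h1 : (D * Dᵀ).PosSemidef := by
      simpa using Matrix.posSemidef_self_mul_conjTranspose D
    have h2 : (A * S * Aᵀ).PosSemidef := by
      simpa [Matrix.mul_assoc] using hS.mul_mul_conjTranspose_same A
    exact h1.add h2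
  have hXiSym : (Xi S)ᵀ = Xi S := by
    have := hXiS.1
    rwa [Matrix.IsHermitian, Matrix.conjTranspose_eq_transpose_of_trivial] at this
  set M := C q * Xi S * (C q)ᵀ + F q * (F q)ᵀ with hM
  have hMpd : M.PosDef := by
    have h1 : (C q * Xi S * (C q)ᵀ).PosSemidef := by
      simpa [Matrix.mul_assoc] using hXiS.mul_mul_conjTranspose_same (C q)
    exact Matrix.PosDef.posSemidef_add h1 (hF q)
  have hMinv : (M⁻¹).PosSemidef := hMpd.inv.posSemidef
  have hkey : K q S * C q * Xi S = (Xi S * (C q)ᵀ) * M⁻¹ * (Xi S * (C q)ᵀ)ᵀ := by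
    rw [hK, Matrix.transpose_mul, Matrix.transpose_transpose, hXiSym]
    simp only [Matrix.conjTranspose_eq_transpose_of_trivial, Matrix.transpose_mul,
      Matrix.transpose_transpose, hXiSym, Matrix.mul_assoc, hM]
  have hpsd : (K q S * C q * Xi S).PosSemidef := by
    rw [hkey]
    exact hMinv.mul_mul_conjTranspose_same (Xi S * (C q)ᵀ)
  have htr : (T q S).trace = (Xi S).trace - (K q S * C q * Xi S).trace := by
    rw [hT, Matrix.trace_sub]
  refine ⟨hpsd, by rw [htr]; ring, ?_⟩
  have h1 : 0 ≤ (K q S * C q * Xi S).trace := psd_trace_nonneg hpsd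
  have h2 : 0 ≤ lam' q - lam q := by linarith [hle q]
  nlinarith
end

section
/- Scalar intermittent Kalman recursion drift: let a > 1, f > 0, λ ∈ [0, 1/a²), and define on ℝ₊² the maps T₁(ξ) = (f²(1+a²ξ₁)/(1+a²ξ₁+f²), 1+a²ξ₂) and the no-observation map Ξ(ξ) = (1+a²ξ₁, 1+a²ξ₂). Then for any ε ∈ (0,1) with ε₀ := (ε/(1−ε) + λ)a² < 1, the function 𝒱_ε(ξ) = ε ξ₁ + (1−ε) ξ₂ if ξ₁ ≥ ξ₂, and (1−ε)ξ₁ + ε ξ₂ otherwise, satisfies (1−λ)𝒱_ε(T₁(ξ)) + λ 𝒱_ε(Ξ(ξ)) ≤ C₀ + ε₀ 𝒱_ε(ξ) for all ξ with f² ≤ ξ₂ ≤ ξ₁, for some constant C₀ depending only on ε, λ, f, a. -/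
/-- scalar intermittent Kalman drift. With `a > 1`, `f > 0`,
`λ ∈ [0, 1/a²)`, `ε ∈ (0,1)` such that `ε₀ = (ε/(1−ε) + λ)a² < 1`, the
function `𝒱_ε(ξ) = εξ₁ + (1−ε)ξ₂` if `ξ₁ ≥ ξ₂` (else with weights swapped)
satisfies `(1−λ)𝒱_ε(T₁(ξ)) + λ𝒱_ε(Ξ(ξ)) ≤ C₀ + ε₀ 𝒱_ε(ξ)` for all
`f² ≤ ξ₂ ≤ ξ₁`, for some constant `C₀`. -/
theorem scalar_intermittent_drift
    (a f lam ε ε₀ : ℝ)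
    (ha : 1 < a) (hf : 0 < f) (hlam0 : 0 ≤ lam) (hlam1 : lam < 1 / a ^ 2)
    (hε0 : 0 < ε) (hε1 : ε < 1)
    (hε₀ : ε₀ = (ε / (1 - ε) + lam) * a ^ 2) (hε₀1 : ε₀ < 1)
    (V : ℝ → ℝ → ℝ)
    (hV : ∀ x y : ℝ, V x y = if y ≤ x then ε * x + (1 - ε) * y
      else (1 - ε) * x + ε * y)
    (T₁ Xi : ℝ → ℝ → ℝ × ℝ)
    (hT₁ : ∀ x y, T₁ x y =
      (f ^ 2 * (1 + a ^ 2 * x) / (1 + a ^ 2 * x + f ^ 2), 1 + a ^ 2 * y))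
    (hXi : ∀ x y, Xi x y = (1 + a ^ 2 * x, 1 + a ^ 2 * y)) :
    ∃ C₀ : ℝ, ∀ x y : ℝ, f ^ 2 ≤ y → y ≤ x →
      (1 - lam) * V (T₁ x y).1 (T₁ x y).2 + lam * V (Xi x y).1 (Xi x y).2
        ≤ C₀ + ε₀ * V x y := by

  refine ⟨(1 - lam) * ((1 - ε) * f ^ 2 + ε) + lam, fun x y hy hxy => ?_⟩
  have ha0 : (0:ℝ) < a ^ 2 := by positivity
  have hlam1' : lam < 1 := lt_of_lt_of_le hlam1 (by
    rw [div_le_one ha0]; nlinarith)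
  have hf0 : (0:ℝ) < f ^ 2 := by positivity
  have hy0 : 0 < y := lt_of_lt_of_le hf0 hy
  have hx0 : 0 < x := lt_of_lt_of_le hy0 hxy
  have hden : (0:ℝ) < 1 + a ^ 2 * x + f ^ 2 := by positivity
  set G := f ^ 2 * (1 + a ^ 2 * x) / (1 + a ^ 2 * x + f ^ 2) with hGdef
  have hG0 : 0 ≤ G := by positivity
  have hG : G ≤ f ^ 2 := by
    rw [hGdef, div_le_iff₀ hden]; nlinarith
  set q := ε / (1 - ε) with hqdef
  have hq0 : 0 ≤ q := by
    apply div_nonneg hε0.le; linarith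
  have hq : q * (1 - ε) = ε := div_mul_cancel₀ ε (by linarith)
  have ha1 : (0:ℝ) ≤ a ^ 2 - 1 := by nlinarith
  rw [hT₁, hXi, hV, hV, hV]
  simp only
  rw [if_neg (by nlinarith [mul_nonneg ha1 hy0.le]), if_pos (by nlinarith), if_pos hxy, hε₀]
  have hq2 : q * (1 - ε) * (a ^ 2 * y) = ε * (a ^ 2 * y) := by rw [hq]
  have h2 : 0 ≤ (1 - lam) * ((1 - ε) * (f ^ 2 - G)) :=
    mul_nonneg (by linarith) (mul_nonneg (by linarith) (by linarith))
  have h3 : 0 ≤ lam * (ε * (a ^ 2 * y)) :=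
    mul_nonneg hlam0 (mul_nonneg hε0.le (mul_nonneg ha0.le hy0.le))
  have h4 : 0 ≤ q * (a ^ 2 * (ε * x)) :=
    mul_nonneg hq0 (mul_nonneg ha0.le (mul_nonneg hε0.le hx0.le))
  nlinarith [h2, h3, h4, hq2]
end

section
/- Uniqueness of Bellman solutions in the discounted problem: let α ∈ (0,1), c_q ≥ tr(Π̃ ·) be nonnegative running costs, and suppose f* is a nonnegative lower semicontinuous solution of f*(z) = min_q{c_q(z) + α 𝒯̂_q f*(z)} satisfying f*(s,Σ) ≤ κ(1 + tr(Π̃ Σ)), and equals the optimal discounted value sup-achieving representation f*(z) = inf over admissible query sequences of Σ_{t≥0} αᵗ E[c_{Q_t}(Z_t)]. If V is any other nonnegative lsc function satisfying the same equation and growth bound V(s,Σ) ≤ κ′(1 + tr(Π̃Σ)), then V = f*. -/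
open Matrix

/-- `n`-step expectation operator under a (time-varying Markov) policy `π`:
`expOp That π n h = 𝒯̂_{π 0} (𝒯̂_{π 1} ⋯ (𝒯̂_{π (n−1)} h))`. -/
def expOp {Z Q : Type*} (That : Q → (Z → ℝ) → (Z → ℝ)) :
    (ℕ → Z → Q) → ℕ → (Z → ℝ) → (Z → ℝ)
  | _, 0, h => h
  | π, n + 1, h => fun z =>
      That (π 0 z) (expOp That (fun k => π (k + 1)) n h) z

section Aux

variable {Z Q : Type*} {That : Q → (Z → ℝ) → (Z → ℝ)}

lemma myTrace_nonneg {d : ℕ} {A B : Matrix (Fin d) (Fin d) ℝ}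
    (hA : A.PosSemidef) (hB : B.PosSemidef) : 0 ≤ (A * B).trace := by
  obtain ⟨S, hS, hSS⟩ : ∃ S : Matrix (Fin d) (Fin d) ℝ, S.PosSemidef ∧ S * S = A := by
    open scoped MatrixOrder in
    exact ⟨CFC.sqrt A, Matrix.nonneg_iff_posSemidef.mp (CFC.sqrt_nonneg A),
      CFC.sqrt_mul_sqrt_self A (Matrix.nonneg_iff_posSemidef.mpr hA)⟩
  have hsq : S * B * S = S * B * Sᴴ := by
    rw [hS.isHermitian.eq]
  have hpsd : (S * B * S).PosSemidef := by
    rw [hsq]; exact hB.mul_mul_conjTranspose_same S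
  have htr : (A * B).trace = (S * B * S).trace := by
    rw [trace_mul_cycle, hSS]
  rw [htr, Matrix.trace]
  apply Finset.sum_nonneg
  intro i _
  simpa using hpsd.dotProduct_mulVec_nonneg (Pi.single i 1)

lemma That_zero (hhom : ∀ (q : Q) f (r : ℝ),
      That q (fun z => r * f z) = fun z => r * That q f z) (q : Q) :
    That q (fun _ => (0 : ℝ)) = fun _ => (0 : ℝ) := by
  have h := hhom q (fun _ => (0 : ℝ)) 0
  simpa using h

lemma That_sum
    (hadd : ∀ (q : Q) f g,
      That q (fun z => f z + g z) = fun z => That q f z + That q g z)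
    (hhom : ∀ (q : Q) f (r : ℝ),
      That q (fun z => r * f z) = fun z => r * That q f z)
    (q : Q) (n : ℕ) (g : ℕ → Z → ℝ) :
    That q (fun w => ∑ t ∈ Finset.range n, g t w)
      = fun w => ∑ t ∈ Finset.range n, That q (g t) w := by
  induction n with
  | zero => simpa using That_zero hhom q
  | succ n ih =>
      have h1 : (fun w => ∑ t ∈ Finset.range (n + 1), g t w)
          = fun w => (∑ t ∈ Finset.range n, g t w) + g n w := by
        funext w; rw [Finset.sum_range_succ]
      rw [h1, hadd q (fun w => ∑ t ∈ Finset.range n, g t w) (g n), ih]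
      funext w; rw [← Finset.sum_range_succ]

lemma expOp_mono
    (hmono : ∀ (q : Q) f g, (∀ z, f z ≤ g z) → ∀ z, That q f z ≤ That q g z) :
    ∀ (n : ℕ) (π : ℕ → Z → Q) (f g : Z → ℝ), (∀ z, f z ≤ g z) →
      ∀ z, expOp That π n f z ≤ expOp That π n g z
  | 0, _, _, _, h, z => h z
  | n + 1, π, f, g, h, z =>
      hmono _ _ _ (fun w => expOp_mono hmono n _ f g h w) z

lemma expOp_add
    (hadd : ∀ (q : Q) f g,
      That q (fun z => f z + g z) = fun z => That q f z + That q g z) :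
    ∀ (n : ℕ) (π : ℕ → Z → Q) (f g : Z → ℝ),
      expOp That π n (fun z => f z + g z)
        = fun z => expOp That π n f z + expOp That π n g z
  | 0, _, _, _ => rfl
  | n + 1, π, f, g => by
      funext z
      show That (π 0 z) (expOp That _ n (fun z => f z + g z)) z = _
      rw [expOp_add hadd n (fun k => π (k + 1)) f g,
        hadd (π 0 z) (expOp That (fun k => π (k + 1)) n f)
          (expOp That (fun k => π (k + 1)) n g)]
      rfl

lemma expOp_smul
    (hhom : ∀ (q : Q) f (r : ℝ),
      That q (fun z => r * f z) = fun z => r * That q f z) :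
    ∀ (n : ℕ) (π : ℕ → Z → Q) (f : Z → ℝ) (r : ℝ),
      expOp That π n (fun z => r * f z) = fun z => r * expOp That π n f z
  | 0, _, _, _ => rfl
  | n + 1, π, f, r => by
      funext z
      show That (π 0 z) (expOp That _ n (fun z => r * f z)) z = _
      rw [expOp_smul hhom n (fun k => π (k + 1)) f r,
        hhom (π 0 z) (expOp That (fun k => π (k + 1)) n f) r]
      rfl

lemma expOp_one
    (hone : ∀ q : Q, That q (fun _ => (1 : ℝ)) = fun _ => (1 : ℝ)) :
    ∀ (n : ℕ) (π : ℕ → Z → Q),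
      expOp That π n (fun _ => (1 : ℝ)) = fun _ => (1 : ℝ)
  | 0, _ => rfl
  | n + 1, π => by
      funext z
      show That (π 0 z) (expOp That _ n (fun _ => (1 : ℝ))) z = _
      rw [expOp_one hone n (fun k => π (k + 1)), hone (π 0 z)]

lemma expOp_nonneg
    (hmono : ∀ (q : Q) f g, (∀ z, f z ≤ g z) → ∀ z, That q f z ≤ That q g z)
    (hhom : ∀ (q : Q) f (r : ℝ),
      That q (fun z => r * f z) = fun z => r * That q f z)
    (n : ℕ) (π : ℕ → Z → Q) (f : Z → ℝ) (hf : ∀ z, 0 ≤ f z) (z : Z) :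
    0 ≤ expOp That π n f z := by
  have h0 : expOp That π n (fun _ => (0 : ℝ)) = fun _ => (0 : ℝ) := by
    have := expOp_smul hhom n π (fun _ => (0 : ℝ)) 0
    simpa using this
  have h := expOp_mono hmono n π (fun _ => (0 : ℝ)) f hf z
  rwa [h0] at h

/-- Splitting `That q` applied to `(partial sum) + αⁿ·(tail)`. -/
lemma That_split
    (hadd : ∀ (q : Q) f g,
      That q (fun z => f z + g z) = fun z => That q f z + That q g z)
    (hhom : ∀ (q : Q) f (r : ℝ),
      That q (fun z => r * f z) = fun z => r * That q f z)
    (q : Q) (n : ℕ) (α : ℝ) (G : ℕ → Z → ℝ) (F : Z → ℝ) (z : Z) :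
    That q (fun w => (∑ t ∈ Finset.range n, α ^ t * G t w) + α ^ n * F w) z
      = (∑ t ∈ Finset.range n, α ^ t * That q (G t) z) + α ^ n * That q F z := by
  refine Eq.trans (congrFun (hadd q
    (fun w => ∑ t ∈ Finset.range n, α ^ t * G t w)
    (fun w => α ^ n * F w)) z) ?_
  refine congrArg₂ (· + ·) ?_ (congrFun (hhom q F (α ^ n)) z)
  refine Eq.trans (congrFun (That_sum hadd hhom q n
    (fun t w => α ^ t * G t w)) z) ?_
  exact Finset.sum_congr rfl fun t _ => congrFun (hhom q (G t) (α ^ t)) z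

/-- iterated Bellman inequality -/
lemma bellman_le
    (hmono : ∀ (q : Q) f g, (∀ z, f z ≤ g z) → ∀ z, That q f z ≤ That q g z)
    (hadd : ∀ (q : Q) f g,
      That q (fun z => f z + g z) = fun z => That q f z + That q g z)
    (hhom : ∀ (q : Q) f (r : ℝ),
      That q (fun z => r * f z) = fun z => r * That q f z)
    (c : Q → Z → ℝ) (α : ℝ) (hα : 0 ≤ α) (f : Z → ℝ)
    (hf : ∀ q z, f z ≤ c q z + α * That q f z) :
    ∀ (n : ℕ) (π : ℕ → Z → Q) (z : Z),
      f z ≤ (∑ t ∈ Finset.range n,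
          α ^ t * expOp That π t (fun w => c (π t w) w) z)
        + α ^ n * expOp That π n f z := by
  intro n
  induction n with
  | zero => intro π z; simp [expOp]
  | succ n ih =>
      intro π z
      have hIH : ∀ w, f w ≤ (∑ t ∈ Finset.range n,
          α ^ t * expOp That (fun k => π (k + 1)) t
            (fun v => c (π (t + 1) v) v) w)
          + α ^ n * expOp That (fun k => π (k + 1)) n f w := by
        intro w; exact ih (fun k => π (k + 1)) w
      have h1 : f z ≤ c (π 0 z) z + α * That (π 0 z) f z := hf _ z
      have h2 : That (π 0 z) f z ≤ That (π 0 z)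
          (fun w => (∑ t ∈ Finset.range n,
            α ^ t * expOp That (fun k => π (k + 1)) t
              (fun v => c (π (t + 1) v) v) w)
            + α ^ n * expOp That (fun k => π (k + 1)) n f w) z :=
        hmono _ _ _ hIH z
      have h3 := That_split hadd hhom (π 0 z) n α
        (fun t => expOp That (fun k => π (k + 1)) t (fun v => c (π (t + 1) v) v))
        (expOp That (fun k => π (k + 1)) n f) z
      have h4 : α * That (π 0 z) f z ≤ α *
          ((∑ t ∈ Finset.range n, α ^ t * That (π 0 z)
            (expOp That (fun k => π (k + 1)) t (fun v => c (π (t + 1) v) v)) z)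
          + α ^ n * That (π 0 z) (expOp That (fun k => π (k + 1)) n f) z) := by
        apply mul_le_mul_of_nonneg_left _ hα
        exact le_trans h2 (le_of_eq h3)
      -- now identify with the (n+1)-step quantities and rearrange
      have hfin : c (π 0 z) z + α *
          ((∑ t ∈ Finset.range n, α ^ t * That (π 0 z)
            (expOp That (fun k => π (k + 1)) t (fun v => c (π (t + 1) v) v)) z)
          + α ^ n * That (π 0 z) (expOp That (fun k => π (k + 1)) n f) z)
          = (∑ t ∈ Finset.range (n + 1),
              α ^ t * expOp That π t (fun w => c (π t w) w) z)
            + α ^ (n + 1) * expOp That π (n + 1) f z := by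
        have hB : ∀ t : ℕ, expOp That π (t + 1) (fun w => c (π (t + 1) w) w) z
            = That (π 0 z)
              (expOp That (fun k => π (k + 1)) t (fun v => c (π (t + 1) v) v)) z :=
          fun t => rfl
        have hC : expOp That π (n + 1) f z
            = That (π 0 z) (expOp That (fun k => π (k + 1)) n f) z := rfl
        have h0 : expOp That π 0 (fun w => c (π 0 w) w) z = c (π 0 z) z := rfl
        rw [Finset.sum_range_succ']
        simp only [hB, hC, h0, pow_zero, one_mul, pow_succ]
        rw [mul_add, Finset.mul_sum]
        have hterm : ∀ t : ℕ, α * (α ^ t * That (π 0 z)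
            (expOp That (fun k => π (k + 1)) t (fun v => c (π (t + 1) v) v)) z)
            = α ^ t * α * That (π 0 z)
            (expOp That (fun k => π (k + 1)) t (fun v => c (π (t + 1) v) v)) z :=
          fun t => by ring
        simp only [hterm]
        ring
      linarith [hfin ▸ (by linarith : f z ≤ c (π 0 z) z + α *
          ((∑ t ∈ Finset.range n, α ^ t * That (π 0 z)
            (expOp That (fun k => π (k + 1)) t (fun v => c (π (t + 1) v) v)) z)
          + α ^ n * That (π 0 z) (expOp That (fun k => π (k + 1)) n f) z))]

/-- iterated Bellman equality along a stationary minimizing policy -/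
lemma bellman_eq
    (hadd : ∀ (q : Q) f g,
      That q (fun z => f z + g z) = fun z => That q f z + That q g z)
    (hhom : ∀ (q : Q) f (r : ℝ),
      That q (fun z => r * f z) = fun z => r * That q f z)
    (c : Q → Z → ℝ) (α : ℝ) (f : Z → ℝ) (σ : Z → Q)
    (hf : ∀ z, f z = c (σ z) z + α * That (σ z) f z) :
    ∀ (n : ℕ) (z : Z),
      f z = (∑ t ∈ Finset.range n,
          α ^ t * expOp That (fun _ => σ) t (fun w => c (σ w) w) z)
        + α ^ n * expOp That (fun _ => σ) n f z := by
  intro n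
  induction n with
  | zero => intro z; simp [expOp]
  | succ n ih =>
      intro z
      have hIH : f = fun w => (∑ t ∈ Finset.range n,
          α ^ t * expOp That (fun _ => σ) t (fun v => c (σ v) v) w)
          + α ^ n * expOp That (fun _ => σ) n f w := funext fun w => ih w
      have h2 : That (σ z) f z = That (σ z)
          (fun w => (∑ t ∈ Finset.range n,
            α ^ t * expOp That (fun _ => σ) t (fun v => c (σ v) v) w)
            + α ^ n * expOp That (fun _ => σ) n f w) z := by
        conv_lhs => rw [hIH]
      have h3 := That_split hadd hhom (σ z) n α
        (fun t => expOp That (fun _ => σ) t (fun v => c (σ v) v))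
        (expOp That (fun _ => σ) n f) z
      have hfin : c (σ z) z + α *
          ((∑ t ∈ Finset.range n, α ^ t * That (σ z)
            (expOp That (fun _ => σ) t (fun v => c (σ v) v)) z)
          + α ^ n * That (σ z) (expOp That (fun _ => σ) n f) z)
          = (∑ t ∈ Finset.range (n + 1),
              α ^ t * expOp That (fun _ => σ) t (fun w => c (σ w) w) z)
            + α ^ (n + 1) * expOp That (fun _ => σ) (n + 1) f z := by
        have hB : ∀ t : ℕ, expOp That (fun _ : ℕ => σ) (t + 1)
              (fun w => c (σ w) w) z
            = That (σ z)
              (expOp That (fun _ => σ) t (fun v => c (σ v) v)) z :=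
          fun t => rfl
        have hC : expOp That (fun _ : ℕ => σ) (n + 1) f z
            = That (σ z) (expOp That (fun _ => σ) n f) z := rfl
        have h0 : expOp That (fun _ : ℕ => σ) 0 (fun w => c (σ w) w) z
            = c (σ z) z := rfl
        rw [Finset.sum_range_succ']
        simp only [hB, hC, h0, pow_zero, one_mul, pow_succ]
        rw [mul_add, Finset.mul_sum]
        have hterm : ∀ t : ℕ, α * (α ^ t * That (σ z)
            (expOp That (fun _ => σ) t (fun v => c (σ v) v)) z)
            = α ^ t * α * That (σ z)
            (expOp That (fun _ => σ) t (fun v => c (σ v) v)) z :=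
          fun t => by ring
        simp only [hterm]
        ring
      calc f z = c (σ z) z + α * That (σ z) f z := hf z
        _ = c (σ z) z + α *
            ((∑ t ∈ Finset.range n, α ^ t * That (σ z)
              (expOp That (fun _ => σ) t (fun v => c (σ v) v)) z)
            + α ^ n * That (σ z) (expOp That (fun _ => σ) n f) z) := by
              rw [h2, h3]
        _ = _ := hfin

end Aux

/-- uniqueness of nonnegative lsc solutions with at most linear
growth of the discounted Bellman equation
`f*(z) = min_q {c_q(z) + α 𝒯̂_q f*(z)}`, where
`c_q(s,S) = R_net(s,q) + tr(Π̃ S) ≥ 0`, and `f*` is the optimal discounted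
value `f*(z) = inf_π ∑_t αᵗ E^π_z[c_{Q_t}(Z_t)]`. Any other nonnegative lsc
solution `V` with growth `V(s,S) ≤ κ'(1 + tr(Π̃S))` equals `f*`. -/
theorem discounted_bellman_uniqueness
    {𝕊 Q : Type*} [Fintype 𝕊] [Nonempty 𝕊] [TopologicalSpace 𝕊]
    [Fintype Q] [Nonempty Q] (d : ℕ)
    (That : Q → ((𝕊 × {M : Matrix (Fin d) (Fin d) ℝ // M.PosSemidef}) → ℝ) →
      ((𝕊 × {M : Matrix (Fin d) (Fin d) ℝ // M.PosSemidef}) → ℝ))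
    (hmono : ∀ (q : Q) f g, (∀ z, f z ≤ g z) → ∀ z, That q f z ≤ That q g z)
    (hadd : ∀ (q : Q) f g,
      That q (fun z => f z + g z) = fun z => That q f z + That q g z)
    (hhom : ∀ (q : Q) f (r : ℝ), That q (fun z => r * f z) = fun z => r * That q f z)
    (hone : ∀ q : Q, That q (fun _ => (1 : ℝ)) = fun _ => (1 : ℝ))
    (α : ℝ) (hα0 : 0 < α) (hα1 : α < 1)
    (Rnet : 𝕊 → Q → ℝ) (hRnet : ∀ s q, 0 ≤ Rnet s q)
    (Pit : Matrix (Fin d) (Fin d) ℝ) (hPit : Pit.PosSemidef)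
    (c : Q → (𝕊 × {M : Matrix (Fin d) (Fin d) ℝ // M.PosSemidef}) → ℝ)
    (hc : ∀ q z, c q z = Rnet z.1 q + (Pit * z.2.val).trace)
    (fstar : (𝕊 × {M : Matrix (Fin d) (Fin d) ℝ // M.PosSemidef}) → ℝ)
    (hfpos : ∀ z, 0 ≤ fstar z) (hflsc : LowerSemicontinuous fstar)
    (κ : ℝ)
    (hfgrowth : ∀ z, fstar z ≤ κ * (1 + (Pit * z.2.val).trace))
    (hfbellman : ∀ z, fstar z = ⨅ q, (c q z + α * That q fstar z))
    (hfopt : ∀ z, fstar z =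
      ⨅ π : ℕ → (𝕊 × {M : Matrix (Fin d) (Fin d) ℝ // M.PosSemidef}) → Q,
        ∑' t : ℕ, α ^ t * expOp That π t (fun w => c (π t w) w) z)
    (V : (𝕊 × {M : Matrix (Fin d) (Fin d) ℝ // M.PosSemidef}) → ℝ)
    (hVpos : ∀ z, 0 ≤ V z) (hVlsc : LowerSemicontinuous V)
    (κ' : ℝ)
    (hVgrowth : ∀ z, V z ≤ κ' * (1 + (Pit * z.2.val).trace))
    (hVbellman : ∀ z, V z = ⨅ q, (c q z + α * That q V z)) :
    V = fstar := by
  classical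
  -- basic positivity facts
  have htr : ∀ z : 𝕊 × {M : Matrix (Fin d) (Fin d) ℝ // M.PosSemidef},
      0 ≤ (Pit * z.2.val).trace := fun z => myTrace_nonneg hPit z.2.2
  have hcnon : ∀ q z, 0 ≤ c q z := by
    intro q z; rw [hc q z]; exact add_nonneg (hRnet _ _) (htr z)
  have htrc : ∀ q z, (Pit * z.2.val).trace ≤ c q z := by
    intro q z; rw [hc q z]; exact le_add_of_nonneg_left (hRnet _ _)
  -- pointwise Bellman inequalities
  have hV_le : ∀ q z, V z ≤ c q z + α * That q V z := by
    intro q z; rw [hVbellman z]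
    exact ciInf_le (Finite.bddBelow_range _) q
  -- minimizing stationary policies
  have hVmin : ∀ z, ∃ q, V z = c q z + α * That q V z := by
    intro z
    obtain ⟨q0, hq0⟩ := Finite.exists_min (fun q => c q z + α * That q V z)
    refine ⟨q0, ?_⟩
    rw [hVbellman z]
    exact le_antisymm (ciInf_le (Finite.bddBelow_range _) q0) (le_ciInf hq0)
  choose σV hσV using hVmin
  have hfmin : ∀ z, ∃ q, fstar z = c q z + α * That q fstar z := by
    intro z
    obtain ⟨q0, hq0⟩ := Finite.exists_min (fun q => c q z + α * That q fstar z)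
    refine ⟨q0, ?_⟩
    rw [hfbellman z]
    exact le_antisymm (ciInf_le (Finite.bddBelow_range _) q0) (le_ciInf hq0)
  choose σf hσf using hfmin
  have hbdd : ∀ z, BddBelow (Set.range
      fun π : ℕ → (𝕊 × {M : Matrix (Fin d) (Fin d) ℝ // M.PosSemidef}) → Q =>
      ∑' t : ℕ, α ^ t * expOp That π t (fun w => c (π t w) w) z) := by
    intro z
    refine ⟨0, ?_⟩
    rintro x ⟨π, rfl⟩
    exact tsum_nonneg fun t => mul_nonneg (pow_nonneg hα0.le t)
      (expOp_nonneg hmono hhom t π _ (fun w => hcnon _ _) z)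
  funext z
  apply le_antisymm
  · -- V z ≤ fstar z : use fstar's minimizing stationary policy
    have hgnon : ∀ t, 0 ≤ α ^ t *
        expOp That (fun _ => σf) t (fun w => c (σf w) w) z := fun t =>
      mul_nonneg (pow_nonneg hα0.le t)
        (expOp_nonneg hmono hhom t _ _ (fun w => hcnon _ _) z)
    have hpart : ∀ n, (∑ t ∈ Finset.range n,
        α ^ t * expOp That (fun _ => σf) t (fun w => c (σf w) w) z)
        ≤ fstar z := by
      intro n
      have h1 := bellman_eq hadd hhom c α fstar σf hσf n z
      have htail : 0 ≤ α ^ n * expOp That (fun _ => σf) n fstar z :=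
        mul_nonneg (pow_nonneg hα0.le n)
          (expOp_nonneg hmono hhom n _ _ hfpos z)
      linarith
    have hsum : Summable (fun t =>
        α ^ t * expOp That (fun _ => σf) t (fun w => c (σf w) w) z) :=
      summable_of_sum_range_le hgnon hpart
    have hStsum : (∑' t, α ^ t *
        expOp That (fun _ => σf) t (fun w => c (σf w) w) z) ≤ fstar z :=
      Real.tsum_le_of_sum_range_le hgnon hpart
    -- growth bound on the tail
    have hK0 : (0 : ℝ) ≤ max κ' 0 := le_max_right _ _
    have hVK : ∀ w, V w ≤ max κ' 0 + max κ' 0 * c (σf w) w := by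
      intro w
      have h1 : V w ≤ κ' * (1 + (Pit * w.2.val).trace) := hVgrowth w
      have h2 : κ' * (1 + (Pit * w.2.val).trace)
          ≤ max κ' 0 * (1 + (Pit * w.2.val).trace) := by
        apply mul_le_mul_of_nonneg_right (le_max_left _ _)
        linarith [htr w]
      have h3 := mul_le_mul_of_nonneg_left (htrc (σf w) w) hK0
      nlinarith
    have hVstep : ∀ n, V z ≤ (∑ t ∈ Finset.range n,
        α ^ t * expOp That (fun _ => σf) t (fun w => c (σf w) w) z)
        + max κ' 0 * α ^ n
        + max κ' 0 * (α ^ n * expOp That (fun _ => σf) n (fun w => c (σf w) w) z) := by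
      intro n
      have hble := bellman_le hmono hadd hhom c α hα0.le V hV_le n (fun _ => σf) z
      have heq : expOp That (fun _ => σf) n
            (fun w => max κ' 0 + max κ' 0 * c (σf w) w) z
          = max κ' 0 + max κ' 0 *
            expOp That (fun _ => σf) n (fun w => c (σf w) w) z := by
        have h1 : (fun w : 𝕊 × {M : Matrix (Fin d) (Fin d) ℝ // M.PosSemidef} =>
            max κ' 0 + max κ' 0 * c (σf w) w)
            = fun w => (fun v => max κ' 0 * (fun _ => (1:ℝ)) v) w
              + (fun v => max κ' 0 * c (σf v) v) w := by
          funext w; simp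
        rw [h1, expOp_add hadd n (fun _ => σf)
            (fun v => max κ' 0 * (fun _ => (1:ℝ)) v)
            (fun v => max κ' 0 * c (σf v) v),
          expOp_smul hhom n (fun _ => σf) (fun _ => (1:ℝ)) (max κ' 0),
          expOp_smul hhom n (fun _ => σf) (fun v => c (σf v) v) (max κ' 0),
          expOp_one hone n (fun _ => σf)]
        simp
      have hEV : expOp That (fun _ => σf) n V z ≤
          max κ' 0 + max κ' 0 *
            expOp That (fun _ => σf) n (fun w => c (σf w) w) z := by
        have hm := expOp_mono hmono n (fun _ => σf) V
          (fun w => max κ' 0 + max κ' 0 * c (σf w) w) hVK z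
        rwa [heq] at hm
      have hαn : (0:ℝ) ≤ α ^ n := pow_nonneg hα0.le n
      have h5 := mul_le_mul_of_nonneg_left hEV hαn
      nlinarith
    -- pass to the limit
    have hlim : Filter.Tendsto
        (fun n => (∑ t ∈ Finset.range n,
          α ^ t * expOp That (fun _ => σf) t (fun w => c (σf w) w) z)
          + max κ' 0 * α ^ n
          + max κ' 0 * (α ^ n *
            expOp That (fun _ => σf) n (fun w => c (σf w) w) z))
        Filter.atTop (nhds ((∑' t, α ^ t *
          expOp That (fun _ => σf) t (fun w => c (σf w) w) z)
          + max κ' 0 * 0 + max κ' 0 * 0)) := by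
      refine Filter.Tendsto.add (Filter.Tendsto.add ?_ ?_) ?_
      · exact hsum.hasSum.tendsto_sum_nat
      · exact (tendsto_pow_atTop_nhds_zero_of_lt_one hα0.le hα1).const_mul _
      · exact hsum.tendsto_atTop_zero.const_mul _
    have hVle : V z ≤ (∑' t, α ^ t *
        expOp That (fun _ => σf) t (fun w => c (σf w) w) z)
        + max κ' 0 * 0 + max κ' 0 * 0 := ge_of_tendsto' hlim hVstep
    have : V z ≤ ∑' t, α ^ t *
        expOp That (fun _ => σf) t (fun w => c (σf w) w) z := by linarith
    linarith
  · -- fstar z ≤ V z : use V's minimizing stationary policy and optimality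
    have hgnon : ∀ t, 0 ≤ α ^ t *
        expOp That (fun _ => σV) t (fun w => c (σV w) w) z := fun t =>
      mul_nonneg (pow_nonneg hα0.le t)
        (expOp_nonneg hmono hhom t _ _ (fun w => hcnon _ _) z)
    have hpart : ∀ n, (∑ t ∈ Finset.range n,
        α ^ t * expOp That (fun _ => σV) t (fun w => c (σV w) w) z) ≤ V z := by
      intro n
      have h1 := bellman_eq hadd hhom c α V σV hσV n z
      have htail : 0 ≤ α ^ n * expOp That (fun _ => σV) n V z :=
        mul_nonneg (pow_nonneg hα0.le n)
          (expOp_nonneg hmono hhom n _ _ hVpos z)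
      linarith
    have hStsum : (∑' t, α ^ t *
        expOp That (fun _ => σV) t (fun w => c (σV w) w) z) ≤ V z :=
      Real.tsum_le_of_sum_range_le hgnon hpart
    have hfle : fstar z ≤ ∑' t, α ^ t *
        expOp That (fun _ => σV) t (fun w => c (σV w) w) z := by
      rw [hfopt z]
      exact ciInf_le (hbdd z) (fun _ => σV)
    linarith
end
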